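/- arXiv:2401.10527 — 9 statements merged into one kernel-verified Lean document; each statement's English description precedes it below -/
import Mathlib

section
/- Let L be a field, U : ℕ×ℕ → L an array, l ∈ ℕ×ℕ, and let f, g ∈ L[X₁,X₂] be nonzero polynomials with s_f = LP(f) and s_g = LP(g). If s_f <_T s_g and n ∈ ℕ×ℕ satisfies s_g ⪯ n and n <_T l, then s_f ⪯ n − s_g + s_f, n − s_g + s_f <_T l, and (f+g)[U]_n = f[U]_{n − s_g + s_f} + g[U]_n. -/
/-- A monomial order on `ℕ × ℕ`: a linear well-order compatible with addition that
refines the componentwise partial order. -/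
structure MonomialOrder2 where
  le : ℕ × ℕ → ℕ × ℕ → Prop
  le_refl : ∀ a, le a a
  le_trans : ∀ a b c, le a b → le b c → le a c
  le_antisymm : ∀ a b, le a b → le b a → a = b
  le_total : ∀ a b, le a b ∨ le b a
  wf : WellFounded (fun a b : ℕ × ℕ => le a b ∧ a ≠ b)
  add_right : ∀ a b k, le a b → le (a + k) (b + k)
  refines : ∀ a b : ℕ × ℕ, a.1 ≤ b.1 → a.2 ≤ b.2 → le a b

/-- Strict version of the monomial order. -/
def MonomialOrder2.lt (T : MonomialOrder2) (a b : ℕ × ℕ) : Prop :=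
  T.le a b ∧ a ≠ b

section Defs

variable {L : Type*} [Field L]

/-- `IsLP T f s` says `s` is the leading power product exponent of `f` w.r.t. `T`. -/
def IsLP (T : MonomialOrder2) (f : AddMonoidAlgebra L (ℕ × ℕ)) (s : ℕ × ℕ) : Prop :=
  s ∈ f.coeff.support ∧ ∀ m ∈ f.coeff.support, T.le m s

/-- `recEval U f s n` is `f[U]_n`, where `s` is the leading power product exponent of `f`. -/
noncomputable def recEval (U : ℕ × ℕ → L) (f : AddMonoidAlgebra L (ℕ × ℕ))
    (s n : ℕ × ℕ) : L :=
  if s.1 ≤ n.1 ∧ s.2 ≤ n.2 then ∑ m ∈ f.coeff.support, f.coeff m * U (m + n - s) else 0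

/-- `Lambda T U l` is `Λ(u^l)`, the set of nonzero polynomials valid at all
`n` with `LP f ⪯ n` and `n <_T l`. -/
def Lambda (T : MonomialOrder2) (U : ℕ × ℕ → L) (l : ℕ × ℕ) :
    Set (AddMonoidAlgebra L (ℕ × ℕ)) :=
  { f | f ≠ 0 ∧ ∀ s n : ℕ × ℕ, IsLP T f s → s.1 ≤ n.1 → s.2 ≤ n.2 → T.lt n l →
      recEval U f s n = 0 }

/-- `𝔏(U)`: nonzero polynomials generating the whole array `U`. -/
def LambdaU (T : MonomialOrder2) (U : ℕ × ℕ → L) :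
    Set (AddMonoidAlgebra L (ℕ × ℕ)) :=
  { f | f ≠ 0 ∧ ∀ (s n : ℕ × ℕ), IsLP T f s → recEval U f s n = 0 }

/-- The footprint `Δ(U)` of the ideal of linear recurring relations of `U`. -/
def footprint (T : MonomialOrder2) (U : ℕ × ℕ → L) : Set (ℕ × ℕ) :=
  { n | ∀ f s, f ∈ LambdaU T U → IsLP T f s → ¬(s.1 ≤ n.1 ∧ s.2 ≤ n.2) }

/-- A doubly periodic array of period `r₁ × r₂`. -/
def DoublyPeriodic (r₁ r₂ : ℕ) (U : ℕ × ℕ → L) : Prop :=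
  ∀ n m : ℕ × ℕ, n.1 % r₁ = m.1 % r₁ → n.2 % r₂ = m.2 % r₂ → U n = U m

/-- Evaluation of a bivariate polynomial with coefficients in `L` at `(x, y)`. -/
noncomputable def evalAtL (f : AddMonoidAlgebra L (ℕ × ℕ)) (x y : L) : L :=
  ∑ m ∈ f.coeff.support, f.coeff m * x ^ m.1 * y ^ m.2

end Defs

/-- Evaluation of a bivariate polynomial with coefficients in `F` at a point of `L`. -/
noncomputable def evalAt {F L : Type*} [Field F] [Field L] [Algebra F L]
    (e : AddMonoidAlgebra F (ℕ × ℕ)) (x y : L) : L :=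
  ∑ s ∈ e.coeff.support, algebraMap F L (e.coeff s) * x ^ s.1 * y ^ s.2

/-- The index box `I = {0,…,r₁−1} × {0,…,r₂−1}`. -/
def Ibox (r₁ r₂ : ℕ) : Set (ℕ × ℕ) := { p | p.1 < r₁ ∧ p.2 < r₂ }

/-- `s^(1),…,s^(d)` (0-indexed: `s 0, …, s (d-1)`) is a sequence of defining points. -/
def IsDefPoints (d : ℕ) (s : ℕ → ℕ × ℕ) : Prop :=
  0 < d ∧ (∀ i j, i < j → j < d → (s j).1 < (s i).1) ∧
    (∀ i j, i < j → j < d → (s i).2 < (s j).2) ∧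
    (s (d - 1)).1 = 0 ∧ (s 0).2 = 0

/-- The delta-set of a sequence of defining points. -/
def deltaSet (d : ℕ) (s : ℕ → ℕ × ℕ) : Set (ℕ × ℕ) :=
  { m | ∃ i, i + 1 < d ∧ m.1 + 1 ≤ (s i).1 ∧ m.2 + 1 ≤ (s (i + 1)).2 }

/-- `IsMinimalSet T U l d s f`: `{f 0, …, f (d-1)}` is a minimal set of polynomials
for `u^l`, with defining points `s 0, …, s (d-1)`. -/
def IsMinimalSet {L : Type*} [Field L] (T : MonomialOrder2) (U : ℕ × ℕ → L) (l : ℕ × ℕ)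
    (d : ℕ) (s : ℕ → ℕ × ℕ) (f : ℕ → AddMonoidAlgebra L (ℕ × ℕ)) : Prop :=
  IsDefPoints d s ∧
    (∀ i, i < d → f i ∈ Lambda T U l ∧ IsLP T (f i) (s i)) ∧
    (∀ g sg, IsLP T g sg → sg ∈ deltaSet d s → g ∉ Lambda T U l)

/-- The set of indexes `𝒮(t)`. -/
def Sset (t : ℕ) : Set (ℕ × ℕ) :=
  { p | (p.1 = 0 ∧ p.2 ≤ 2 * t - 1) ∨ (p.2 = 0 ∧ p.1 ≤ 2 * t - 1) ∨
      (1 ≤ p.1 ∧ 1 ≤ p.2 ∧ p.1 + p.2 ≤ t) }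


/-- if `LP f <_T LP g`, `LP g ⪯ n` and `n <_T l`, then
`LP f ⪯ n − LP g + LP f`, `n − LP g + LP f <_T l`, and
`(f+g)[U]_n = f[U]_{n − LP g + LP f} + g[U]_n`. -/
theorem stmt_0 (T : MonomialOrder2) {L : Type*} [Field L] (U : ℕ × ℕ → L) (l : ℕ × ℕ)
    (f g : AddMonoidAlgebra L (ℕ × ℕ)) (hf : f ≠ 0) (hg : g ≠ 0)
    (sf sg : ℕ × ℕ) (hsf : IsLP T f sf) (hsg : IsLP T g sg) (hlt : T.lt sf sg)
    (n : ℕ × ℕ) (hn1 : sg.1 ≤ n.1) (hn2 : sg.2 ≤ n.2) (hnl : T.lt n l) :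
    sf.1 ≤ (n - sg + sf).1 ∧ sf.2 ≤ (n - sg + sf).2 ∧ T.lt (n - sg + sf) l ∧
      recEval U (f + g) sg n = recEval U f sf (n - sg + sf) + recEval U g sg n := by
  have h1 : sf.1 ≤ (n - sg + sf).1 := Nat.le_add_left _ _
  have h2 : sf.2 ≤ (n - sg + sf).2 := Nat.le_add_left _ _
  have heqn : sg + (n - sg) = n := by
    ext <;> simp <;> omega
  have hcomm : sf + (n - sg) = n - sg + sf := add_comm _ _
  have keyle : T.le (n - sg + sf) n := by
    have := T.add_right sf sg (n - sg) hlt.1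
    rwa [hcomm, heqn] at this
  have keyne : n - sg + sf ≠ n := by
    intro h
    apply hlt.2
    have h1' : (n - sg + sf).1 = n.1 := congrArg Prod.fst h
    have h2' : (n - sg + sf).2 = n.2 := congrArg Prod.snd h
    simp only [Prod.fst_add, Prod.snd_add, Prod.fst_sub, Prod.snd_sub] at h1' h2'
    ext <;> omega
  refine ⟨h1, h2, ⟨T.le_trans _ _ _ keyle hnl.1, fun h => hnl.2 (T.le_antisymm _ _ hnl.1 (h ▸ keyle))⟩, ?_⟩
  have harg : ∀ m : ℕ × ℕ, m + (n - sg + sf) - sf = m + n - sg := by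
    intro m
    ext <;> simp <;> omega
  rw [recEval, recEval, recEval, if_pos ⟨hn1, hn2⟩, if_pos ⟨h1, h2⟩, if_pos ⟨hn1, hn2⟩]
  have hsub : (f + g).coeff.support ⊆ f.coeff.support ∪ g.coeff.support := by rw [AddMonoidAlgebra.coeff_add]; exact Finsupp.support_add
  calc ∑ m ∈ (f + g).coeff.support, (f + g).coeff m * U (m + n - sg)
      = ∑ m ∈ f.coeff.support ∪ g.coeff.support, (f + g).coeff m * U (m + n - sg) := by
        refine Finset.sum_subset hsub fun m _ hm => ?_
        rw [Finsupp.notMem_support_iff.mp hm, zero_mul]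
    _ = ∑ m ∈ f.coeff.support ∪ g.coeff.support, (f.coeff m * U (m + n - sg) + g.coeff m * U (m + n - sg)) := by
        refine Finset.sum_congr rfl fun m _ => ?_
        rw [AddMonoidAlgebra.coeff_add, Finsupp.add_apply, add_mul]
    _ = (∑ m ∈ f.coeff.support ∪ g.coeff.support, f.coeff m * U (m + n - sg))
        + ∑ m ∈ f.coeff.support ∪ g.coeff.support, g.coeff m * U (m + n - sg) := Finset.sum_add_distrib
    _ = (∑ m ∈ f.coeff.support, f.coeff m * U (m + n - sg)) + ∑ m ∈ g.coeff.support, g.coeff m * U (m + n - sg) := by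
        congr 1
        · refine (Finset.sum_subset Finset.subset_union_left fun m _ hm => ?_).symm
          rw [Finsupp.notMem_support_iff.mp hm, zero_mul]
        · refine (Finset.sum_subset Finset.subset_union_right fun m _ hm => ?_).symm
          rw [Finsupp.notMem_support_iff.mp hm, zero_mul]
    _ = (∑ m ∈ f.coeff.support, f.coeff m * U (m + (n - sg + sf) - sf)) + ∑ m ∈ g.coeff.support, g.coeff m * U (m + n - sg) := by
        congr 1
        exact Finset.sum_congr rfl fun m _ => by rw [harg]
end

section
/- Let L be a field, U : ℕ×ℕ → L an array, and l, t ∈ ℕ×ℕ. If f, g ∈ L[X₁,X₂] are nonzero polynomials with f ∈ Λ(u^l), g ∈ Λ(u^l), and LP(f) + t ≠ LP(g), then X₁^{t₁}X₂^{t₂}·f + g ∈ Λ(u^l). -/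
section Aux

lemma MO2.lt_of_le_of_lt (T : MonomialOrder2) {a b c : ℕ × ℕ}
    (h1 : T.le a b) (h2 : T.lt b c) : T.lt a c :=
  ⟨T.le_trans _ _ _ h1 h2.1, fun h => h2.2 (T.le_antisymm _ _ h2.1 (h ▸ h1))⟩

lemma MO2.isLP_unique {L : Type*} [Field L] (T : MonomialOrder2)
    {f : AddMonoidAlgebra L (ℕ × ℕ)} {s s' : ℕ × ℕ}
    (h : IsLP T f s) (h' : IsLP T f s') : s = s' :=
  T.le_antisymm _ _ (h'.2 _ h.1) (h.2 _ h'.1)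

lemma MO2.shift_eq {L : Type*} [Field L] (t : ℕ × ℕ) (f : AddMonoidAlgebra L (ℕ × ℕ)) :
    (AddMonoidAlgebra.single t (1 : L) * f).coeff = Finsupp.mapDomain (fun m => t + m) f.coeff := by
  ext m
  by_cases hm : t.1 ≤ m.1 ∧ t.2 ≤ m.2
  · obtain ⟨k, rfl⟩ : ∃ k, m = t + k :=
      ⟨m - t, Prod.ext (by simp only [Prod.fst_add, Prod.fst_sub]; omega)
        (by simp only [Prod.snd_add, Prod.snd_sub]; omega)⟩
    rw [AddMonoidAlgebra.coeff_single_mul_add,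
      Finsupp.mapDomain_apply (fun a b h => by simpa using h), one_mul]
  · rw [AddMonoidAlgebra.coeff_single_mul_of_forall_add_ne]
    · rw [Finsupp.mapDomain_notin_range]
      rintro ⟨d, rfl⟩
      exact hm ⟨by simp, by simp⟩
    · intro d hd
      exact hm ⟨by rw [← hd]; simp, by rw [← hd]; simp⟩

end Aux

/-- if `f, g ∈ Λ(u^l)` and `LP f + t ≠ LP g`, then
`X₁^{t₁}X₂^{t₂}·f + g ∈ Λ(u^l)`. -/
theorem stmt_2 (T : MonomialOrder2) {L : Type*} [Field L] (U : ℕ × ℕ → L) (l t : ℕ × ℕ)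
    (f g : AddMonoidAlgebra L (ℕ × ℕ)) (hf0 : f ≠ 0) (hg0 : g ≠ 0)
    (hf : f ∈ Lambda T U l) (hg : g ∈ Lambda T U l)
    (sf sg : ℕ × ℕ) (hsf : IsLP T f sf) (hsg : IsLP T g sg) (hne : sf + t ≠ sg) :
    AddMonoidAlgebra.single t (1 : L) * f + g ∈ Lambda T U l := by
  classical
  have hinj : Function.Injective (fun m : ℕ × ℕ => t + m) := fun a b hab => by
    simpa using hab
  set F := Finsupp.mapDomain (fun m => t + m) f.coeff with hFdef
  have hmul : (AddMonoidAlgebra.single t (1 : L) * f).coeff = F := MO2.shift_eq t f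
  have hFsupp : F.support = f.coeff.support.image (fun m => t + m) :=
    Finsupp.mapDomain_support_of_injective hinj f.coeff
  have hFapp : ∀ m, F (t + m) = f.coeff m := fun m => Finsupp.mapDomain_apply hinj f.coeff m
  set h := AddMonoidAlgebra.single t (1 : L) * f + g with hhdef
  have happly : ∀ m, h.coeff m = F m + g.coeff m := fun m => by rw [hhdef, AddMonoidAlgebra.coeff_add, hmul]; rfl
  have hsupp : h.coeff.support ⊆ F.support ∪ g.coeff.support := by
    rw [hhdef, AddMonoidAlgebra.coeff_add, hmul]; exact Finsupp.support_add
  -- leading point of h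
  have hFmax : ∀ m ∈ F.support, T.le m (sf + t) := by
    intro m hm
    rw [hFsupp, Finset.mem_image] at hm
    obtain ⟨m', hm', rfl⟩ := hm
    have := T.add_right m' sf t (hsf.2 m' hm')
    simpa [add_comm] using this
  obtain ⟨s₀, hLP, hor⟩ :
      ∃ s₀, IsLP T h s₀ ∧ ((s₀ = sf + t ∧ T.le sg (sf + t)) ∨ (s₀ = sg ∧ T.le (sf + t) sg)) := by
    rcases T.le_total sg (sf + t) with hc | hc
    · refine ⟨sf + t, ⟨?_, ?_⟩, Or.inl ⟨rfl, hc⟩⟩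
      · have hgz : g.coeff (sf + t) = 0 := by
          by_contra hgz
          exact hne (T.le_antisymm _ _ (hsg.2 _ (Finsupp.mem_support_iff.mpr hgz)) hc)
        have : h.coeff (sf + t) = f.coeff sf := by
          rw [happly, hgz, add_zero, add_comm sf t, hFapp]
        rw [Finsupp.mem_support_iff, this]
        exact Finsupp.mem_support_iff.mp hsf.1
      · intro m hm
        rcases Finset.mem_union.mp (hsupp hm) with hm' | hm'
        · exact hFmax m hm'
        · exact T.le_trans _ _ _ (hsg.2 m hm') hc
    · refine ⟨sg, ⟨?_, ?_⟩, Or.inr ⟨rfl, hc⟩⟩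
      · have hFz : F sg = 0 := by
          by_contra hFz
          have := hFmax sg (Finsupp.mem_support_iff.mpr hFz)
          exact hne (T.le_antisymm _ _ hc this)
        have : h.coeff sg = g.coeff sg := by rw [happly, hFz, zero_add]
        rw [Finsupp.mem_support_iff, this]
        exact Finsupp.mem_support_iff.mp hsg.1
      · intro m hm
        rcases Finset.mem_union.mp (hsupp hm) with hm' | hm'
        · exact T.le_trans _ _ _ (hFmax m hm') hc
        · exact hsg.2 m hm'
  have hh0 : h ≠ 0 := by
    intro he
    have := hLP.1
    rw [he] at this
    simp at this
  refine ⟨hh0, ?_⟩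
  intro s n hs hn1 hn2 hnl
  have hseq : s = s₀ := MO2.isLP_unique T hs hLP
  subst hseq
  -- split the sum
  have key : (∑ m ∈ h.coeff.support, h.coeff m * U (m + n - s)) =
      (∑ m ∈ f.coeff.support, f.coeff m * U (t + m + n - s)) +
      (∑ m ∈ g.coeff.support, g.coeff m * U (m + n - s)) := by
    rw [Finset.sum_subset hsupp
      (fun x _ hx => by rw [Finsupp.notMem_support_iff.mp hx, zero_mul])]
    have e2 : ∑ m ∈ F.support ∪ g.coeff.support, h.coeff m * U (m + n - s)
        = (∑ m ∈ F.support ∪ g.coeff.support, F m * U (m + n - s)) +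
          ∑ m ∈ F.support ∪ g.coeff.support, g.coeff m * U (m + n - s) := by
      rw [← Finset.sum_add_distrib]
      exact Finset.sum_congr rfl fun m _ => by rw [happly, add_mul]
    rw [e2,
      ← Finset.sum_subset (Finset.subset_union_left (s₂ := g.coeff.support))
        (fun x _ hx => by rw [Finsupp.notMem_support_iff.mp hx, zero_mul]),
      ← Finset.sum_subset (Finset.subset_union_right (s₁ := F.support))
        (fun x _ hx => by rw [Finsupp.notMem_support_iff.mp hx, zero_mul]),
      hFsupp, Finset.sum_image (fun a _ b _ hh => hinj hh)]
    congr 1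
    exact Finset.sum_congr rfl fun m _ => by rw [hFapp]
  rw [recEval, if_pos ⟨hn1, hn2⟩, key]
  rcases hor with ⟨he, hc⟩ | ⟨he, hc⟩
  · -- s = sf + t
    rw [he] at hn1 hn2 ⊢
    have hn1' : sf.1 + t.1 ≤ n.1 := hn1
    have hn2' : sf.2 + t.2 ≤ n.2 := hn2
    have z1 : (∑ m ∈ f.coeff.support, f.coeff m * U (m + n - sf)) = 0 := by
      have := hf.2 sf n hsf (by omega) (by omega) hnl
      rwa [recEval, if_pos ⟨by omega, by omega⟩] at this
    have e1 : (∑ m ∈ f.coeff.support, f.coeff m * U (t + m + n - (sf + t)))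
        = ∑ m ∈ f.coeff.support, f.coeff m * U (m + n - sf) := by
      refine Finset.sum_congr rfl fun m _ => ?_
      congr 2
      exact Prod.ext (by show t.1 + m.1 + n.1 - (sf.1 + t.1) = m.1 + n.1 - sf.1; omega)
        (by show t.2 + m.2 + n.2 - (sf.2 + t.2) = m.2 + n.2 - sf.2; omega)
    set n' : ℕ × ℕ := sg + (n - (sf + t)) with hn'def
    have hsum : (sf + t) + (n - (sf + t)) = n :=
      Prod.ext (by show sf.1 + t.1 + (n.1 - (sf.1 + t.1)) = n.1; omega)
        (by show sf.2 + t.2 + (n.2 - (sf.2 + t.2)) = n.2; omega)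
    have hlen : T.le n' n := by
      have := T.add_right sg (sf + t) (n - (sf + t)) hc
      rwa [hsum] at this
    have hltn' : T.lt n' l := MO2.lt_of_le_of_lt T hlen hnl
    have z2 : (∑ m ∈ g.coeff.support, g.coeff m * U (m + n' - sg)) = 0 := by
      have h1 : sg.1 ≤ n'.1 := Nat.le_add_right _ _
      have h2 : sg.2 ≤ n'.2 := Nat.le_add_right _ _
      have := hg.2 sg n' hsg h1 h2 hltn'
      rwa [recEval, if_pos ⟨h1, h2⟩] at this
    have e2 : (∑ m ∈ g.coeff.support, g.coeff m * U (m + n - (sf + t)))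
        = ∑ m ∈ g.coeff.support, g.coeff m * U (m + n' - sg) := by
      refine Finset.sum_congr rfl fun m _ => ?_
      congr 2
      exact Prod.ext
        (by show m.1 + n.1 - (sf.1 + t.1) = m.1 + (sg.1 + (n.1 - (sf.1 + t.1))) - sg.1; omega)
        (by show m.2 + n.2 - (sf.2 + t.2) = m.2 + (sg.2 + (n.2 - (sf.2 + t.2))) - sg.2; omega)
    rw [e1, z1, e2, z2, add_zero]
  · -- s = sg
    rw [he] at hn1 hn2 ⊢
    have hn1' : sg.1 ≤ n.1 := hn1
    have hn2' : sg.2 ≤ n.2 := hn2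
    have z2 : (∑ m ∈ g.coeff.support, g.coeff m * U (m + n - sg)) = 0 := by
      have := hg.2 sg n hsg hn1 hn2 hnl
      rwa [recEval, if_pos ⟨hn1, hn2⟩] at this
    set n' : ℕ × ℕ := (sf + t) + (n - sg) with hn'def
    have hsum : sg + (n - sg) = n :=
      Prod.ext (by show sg.1 + (n.1 - sg.1) = n.1; omega)
        (by show sg.2 + (n.2 - sg.2) = n.2; omega)
    have hlen : T.le n' n := by
      have := T.add_right (sf + t) sg (n - sg) hc
      rwa [hsum] at this
    have hltn' : T.lt n' l := MO2.lt_of_le_of_lt T hlen hnl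
    have z1 : (∑ m ∈ f.coeff.support, f.coeff m * U (m + n' - sf)) = 0 := by
      have h1 : sf.1 ≤ n'.1 := by
        show sf.1 ≤ sf.1 + t.1 + (n.1 - sg.1); omega
      have h2 : sf.2 ≤ n'.2 := by
        show sf.2 ≤ sf.2 + t.2 + (n.2 - sg.2); omega
      have := hf.2 sf n' hsf h1 h2 hltn'
      rwa [recEval, if_pos ⟨h1, h2⟩] at this
    have e1 : (∑ m ∈ f.coeff.support, f.coeff m * U (t + m + n - sg))
        = ∑ m ∈ f.coeff.support, f.coeff m * U (m + n' - sf) := by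
      refine Finset.sum_congr rfl fun m _ => ?_
      congr 2
      exact Prod.ext
        (by show t.1 + m.1 + n.1 - sg.1 = m.1 + (sf.1 + t.1 + (n.1 - sg.1)) - sf.1; omega)
        (by show t.2 + m.2 + n.2 - sg.2 = m.2 + (sf.2 + t.2 + (n.2 - sg.2)) - sf.2; omega)
    rw [e1, z1, z2, add_zero]
end

section
/- (Sakata–Massey Theorem) Let L be a field, U : ℕ×ℕ → L an array, and l ∈ ℕ×ℕ. Let f ∈ L[X₁,X₂] be a nonzero polynomial with LP(f) = s such that f ∈ Λ(u^l) but f[U]_l ≠ 0 (in particular s ⪯ l). If g ∈ L[X₁,X₂] is a nonzero polynomial with LP(g) = l − s and g ∈ Λ(u^l), then g[U]_l ≠ 0. -/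
/-- Sakata–Massey Theorem: if `f ∈ Λ(u^l)` with `LP f = s` and
`f[U]_l ≠ 0`, and `g ∈ Λ(u^l)` is nonzero with `LP g = l − s`, then `g[U]_l ≠ 0`. -/
theorem stmt_4 (T : MonomialOrder2) {L : Type*} [Field L] (U : ℕ × ℕ → L) (l : ℕ × ℕ)
    (f : AddMonoidAlgebra L (ℕ × ℕ)) (hf0 : f ≠ 0) (s : ℕ × ℕ) (hs : IsLP T f s)
    (hf : f ∈ Lambda T U l) (hfl : recEval U f s l ≠ 0)
    (g : AddMonoidAlgebra L (ℕ × ℕ)) (hg0 : g ≠ 0) (hgs : IsLP T g (l - s))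
    (hg : g ∈ Lambda T U l) :
    recEval U g (l - s) l ≠ 0 := by
  classical
  have hf_s : f.coeff s ≠ 0 := Finsupp.mem_support_iff.mp hs.1
  have hg_ls : g.coeff (l - s) ≠ 0 := Finsupp.mem_support_iff.mp hgs.1
  have hsl : s.1 ≤ l.1 ∧ s.2 ≤ l.2 := by
    by_contra h
    exact hfl (by simp [recEval, h])
  obtain ⟨hsl1, hsl2⟩ := hsl
  have hls : s + (l - s) = l := by
    apply Prod.ext <;> simp <;> omega
  have hls' : (l - s) + s = l := (add_comm _ _).trans hls
  have hgEval : ∀ m : ℕ × ℕ, recEval U g (l - s) (m + (l - s))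
      = ∑ k ∈ g.coeff.support, g.coeff k * U (m + k) := by
    intro m
    rw [recEval, if_pos (by constructor <;> simp)]
    refine Finset.sum_congr rfl fun k _ => ?_
    rw [show k + (m + (l - s)) - (l - s) = m + k from by apply Prod.ext <;> simp <;> omega]
  have hfEval : ∀ k : ℕ × ℕ, recEval U f s (k + s)
      = ∑ m ∈ f.coeff.support, f.coeff m * U (m + k) := by
    intro k
    rw [recEval, if_pos (by constructor <;> simp)]
    refine Finset.sum_congr rfl fun m _ => ?_
    rw [show m + (k + s) - s = m + k from by apply Prod.ext <;> simp <;> omega]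
  have hfz : ∀ k ∈ g.coeff.support, k ≠ l - s → recEval U f s (k + s) = 0 := by
    intro k hk hkne
    refine hf.2 s (k + s) hs (by simp) (by simp) ⟨?_, ?_⟩
    · have := T.add_right k (l - s) s (hgs.2 k hk)
      rwa [hls'] at this
    · intro h
      exact hkne (add_right_cancel (h.trans hls'.symm))
  have hgz : ∀ m ∈ f.coeff.support, m ≠ s → recEval U g (l - s) (m + (l - s)) = 0 := by
    intro m hm hmne
    refine hg.2 (l - s) (m + (l - s)) hgs (by simp) (by simp) ⟨?_, ?_⟩
    · have := T.add_right m s (l - s) (hs.2 m hm)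
      rwa [hls] at this
    · intro h
      exact hmne (add_right_cancel (h.trans hls.symm))
  have key : f.coeff s * recEval U g (l - s) l = g.coeff (l - s) * recEval U f s l := by
    have h1 : ∑ m ∈ f.coeff.support, f.coeff m * recEval U g (l - s) (m + (l - s))
        = f.coeff s * recEval U g (l - s) l := by
      rw [Finset.sum_eq_single s]
      · rw [hls]
      · intro m hm hmne; rw [hgz m hm hmne, mul_zero]
      · intro hsns; exact absurd hs.1 hsns
    have h2 : ∑ k ∈ g.coeff.support, g.coeff k * recEval U f s (k + s)
        = g.coeff (l - s) * recEval U f s l := by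
      rw [Finset.sum_eq_single (l - s)]
      · rw [hls']
      · intro k hk hkne; rw [hfz k hk hkne, mul_zero]
      · intro h; exact absurd hgs.1 h
    calc f.coeff s * recEval U g (l - s) l
        = ∑ m ∈ f.coeff.support, f.coeff m * recEval U g (l - s) (m + (l - s)) := h1.symm
      _ = ∑ m ∈ f.coeff.support, ∑ k ∈ g.coeff.support, f.coeff m * (g.coeff k * U (m + k)) := by
          refine Finset.sum_congr rfl fun m _ => ?_
          rw [hgEval m, Finset.mul_sum]
      _ = ∑ k ∈ g.coeff.support, ∑ m ∈ f.coeff.support, f.coeff m * (g.coeff k * U (m + k)) := Finset.sum_comm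
      _ = ∑ k ∈ g.coeff.support, g.coeff k * recEval U f s (k + s) := by
          refine Finset.sum_congr rfl fun k _ => ?_
          rw [hfEval k, Finset.mul_sum]
          exact Finset.sum_congr rfl fun m _ => by ring
      _ = g.coeff (l - s) * recEval U f s l := h2
  intro h0
  rw [h0, mul_zero] at key
  rcases mul_eq_zero.mp key.symm with h | h
  · exact hg_ls h
  · exact hfl h
end

section
/- Let U be the syndrome table afforded by e and τ. For every nonzero polynomial f ∈ L[X₁,X₂] with l = LP(f) and every n ∈ ℕ×ℕ with l ⪯ n, one has Σ_{k∈supp(f)} f_k · u_{k+n−l} = Σ_{s∈supp(e)} e_s · α₁^{s₁(n₁−l₁+τ₁)} · α₂^{s₂(n₂−l₂+τ₂)} · f(α₁^{s₁}, α₂^{s₂}); that is, f[U]_n = Σ_{s∈supp(e)} e_s · α̅^{s·(n−l+τ)} · f(α̅^s). -/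
/-- for the syndrome table `U` afforded by `e` and `τ`, any nonzero `f`
with `LP f = l` and any `n` with `l ⪯ n` satisfy
`f[U]_n = Σ_{s∈supp(e)} e_s · α₁^{s₁(n₁−l₁+τ₁)} · α₂^{s₂(n₂−l₂+τ₂)} · f(α̅^s)`. -/
theorem stmt_5 (T : MonomialOrder2) {F L : Type*} [Field F] [Fintype F] [Field L]
    [Algebra F L] (r₁ r₂ : ℕ) (hr₁ : 0 < r₁) (hr₂ : 0 < r₂)
    (hq : Nat.Coprime (r₁ * r₂) (Fintype.card F))
    (α₁ α₂ : L) (hα₁ : IsPrimitiveRoot α₁ r₁) (hα₂ : IsPrimitiveRoot α₂ r₂)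
    (e : AddMonoidAlgebra F (ℕ × ℕ)) (he : ↑e.coeff.support ⊆ Ibox r₁ r₂)
    (τ : ℕ × ℕ) (hτ : τ ∈ Ibox r₁ r₂) (U : ℕ × ℕ → L)
    (hU : ∀ n : ℕ × ℕ, U n = evalAt e (α₁ ^ (τ.1 + n.1)) (α₂ ^ (τ.2 + n.2)))
    (f : AddMonoidAlgebra L (ℕ × ℕ)) (hf : f ≠ 0) (l : ℕ × ℕ) (hl : IsLP T f l)
    (n : ℕ × ℕ) (hn1 : l.1 ≤ n.1) (hn2 : l.2 ≤ n.2) :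
    recEval U f l n =
      ∑ s ∈ e.coeff.support, algebraMap F L (e.coeff s) * α₁ ^ (s.1 * (n.1 - l.1 + τ.1)) *
        α₂ ^ (s.2 * (n.2 - l.2 + τ.2)) * evalAtL f (α₁ ^ s.1) (α₂ ^ s.2) := by
  rw [recEval, if_pos ⟨hn1, hn2⟩]
  simp only [hU, evalAt, evalAtL, Finset.mul_sum]
  rw [Finset.sum_comm]
  refine Finset.sum_congr rfl fun s hs => Finset.sum_congr rfl fun m hm => ?_
  have h1 : (m + n - l).1 = m.1 + (n.1 - l.1) := by
    simp only [Prod.fst_sub, Prod.fst_add]; omega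
  have h2 : (m + n - l).2 = m.2 + (n.2 - l.2) := by
    simp only [Prod.snd_sub, Prod.snd_add]; omega
  rw [h1, h2, ← pow_mul, ← pow_mul, ← pow_mul, ← pow_mul,
    show (τ.1 + (m.1 + (n.1 - l.1))) * s.1 = s.1 * (n.1 - l.1 + τ.1) + s.1 * m.1 by ring,
    show (τ.2 + (m.2 + (n.2 - l.2))) * s.2 = s.2 * (n.2 - l.2 + τ.2) + s.2 * m.2 by ring,
    pow_add, pow_add]
  ring
end

section
/- Let U be the syndrome table afforded by e and τ. For every nonzero polynomial f ∈ L[X₁,X₂] with supp(f) ⊆ I, the following are equivalent: (1) f(α̅^s) = 0 for all s ∈ supp(e); (2) Σ_{s∈supp(e)} e_s · α₁^{s₁n₁} · α₂^{s₂n₂} · f(α̅^s) = 0 for all n ∈ ℕ×ℕ with τ ⪯ n; (3) f[U]_n = 0 for all n ∈ ℕ×ℕ. -/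
/-- aux: every nonempty finset has a T-maximum. -/
theorem finset_exists_max (T : MonomialOrder2) (s : Finset (ℕ × ℕ)) (hs : s.Nonempty) :
    ∃ a ∈ s, ∀ b ∈ s, T.le b a := by
  classical
  induction s using Finset.induction_on with
  | empty => simp at hs
  | @insert x t hx ih =>
    rcases t.eq_empty_or_nonempty with rfl | ht
    · exact ⟨x, by simp, by simp [T.le_refl]⟩
    · obtain ⟨a, ha, hmax⟩ := ih ht
      rcases T.le_total x a with h | h
      · refine ⟨a, Finset.mem_insert_of_mem ha, fun b hb => ?_⟩
        rcases Finset.mem_insert.1 hb with rfl | hb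
        · exact h
        · exact hmax b hb
      · refine ⟨x, Finset.mem_insert_self _ _, fun b hb => ?_⟩
        rcases Finset.mem_insert.1 hb with rfl | hb
        · exact T.le_refl b
        · exact T.le_trans _ _ _ (hmax b hb) h

noncomputable def chi {L : Type*} [Field L] (x y : L) : Multiplicative (ℕ × ℕ) →* L where
  toFun m := x ^ (Multiplicative.toAdd m).1 * y ^ (Multiplicative.toAdd m).2
  map_one' := by simp
  map_mul' a b := by
    simp only [toAdd_mul, Prod.fst_add, Prod.snd_add, pow_add]; ring

theorem chi_apply' {L : Type*} [Field L] (x y : L) (m : Multiplicative (ℕ × ℕ)) :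
    chi x y m = x ^ (Multiplicative.toAdd m).1 * y ^ (Multiplicative.toAdd m).2 := rfl

theorem recEval_eq {F L : Type*} [Field F] [Field L] [Algebra F L]
    (α₁ α₂ : L) (e : AddMonoidAlgebra F (ℕ × ℕ)) (τ : ℕ × ℕ) (U : ℕ × ℕ → L)
    (hU : ∀ n : ℕ × ℕ, U n = evalAt e (α₁ ^ (τ.1 + n.1)) (α₂ ^ (τ.2 + n.2)))
    (f : AddMonoidAlgebra L (ℕ × ℕ)) (sf n : ℕ × ℕ) (h1 : sf.1 ≤ n.1) (h2 : sf.2 ≤ n.2) :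
    recEval U f sf n = ∑ s ∈ e.coeff.support, algebraMap F L (e.coeff s)
      * α₁ ^ (s.1 * (τ.1 + n.1 - sf.1)) * α₂ ^ (s.2 * (τ.2 + n.2 - sf.2))
      * evalAtL f (α₁ ^ s.1) (α₂ ^ s.2) := by
  unfold recEval evalAtL
  rw [if_pos ⟨h1, h2⟩]
  simp only [hU, evalAt, Finset.mul_sum]
  rw [Finset.sum_comm]
  refine Finset.sum_congr rfl fun s _ => ?_
  refine Finset.sum_congr rfl fun m _ => ?_
  have e1 : (m + n - sf).1 = m.1 + (n.1 - sf.1) := by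
    change m.1 + n.1 - sf.1 = _; omega
  have e2 : (m + n - sf).2 = m.2 + (n.2 - sf.2) := by
    change m.2 + n.2 - sf.2 = _; omega
  have e3 : τ.1 + n.1 - sf.1 = τ.1 + (n.1 - sf.1) := by omega
  have e4 : τ.2 + n.2 - sf.2 = τ.2 + (n.2 - sf.2) := by omega
  rw [e1, e2, e3, e4]
  ring



/-- for the syndrome table `U` afforded by `e` and `τ`, and a nonzero
polynomial `f` with `supp f ⊆ I`, the conditions (1) `f(α̅^s) = 0` for all
`s ∈ supp(e)`, (2) `Σ_{s∈supp(e)} e_s α₁^{s₁n₁} α₂^{s₂n₂} f(α̅^s) = 0` for all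
`n ⪰ τ`, and (3) `f[U]_n = 0` for all `n`, are equivalent. -/
theorem stmt_6 (T : MonomialOrder2) {F L : Type*} [Field F] [Fintype F] [Field L]
    [Algebra F L] (r₁ r₂ : ℕ) (hr₁ : 0 < r₁) (hr₂ : 0 < r₂)
    (hq : Nat.Coprime (r₁ * r₂) (Fintype.card F))
    (α₁ α₂ : L) (hα₁ : IsPrimitiveRoot α₁ r₁) (hα₂ : IsPrimitiveRoot α₂ r₂)
    (e : AddMonoidAlgebra F (ℕ × ℕ)) (he : ↑e.coeff.support ⊆ Ibox r₁ r₂)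
    (τ : ℕ × ℕ) (hτ : τ ∈ Ibox r₁ r₂) (U : ℕ × ℕ → L)
    (hU : ∀ n : ℕ × ℕ, U n = evalAt e (α₁ ^ (τ.1 + n.1)) (α₂ ^ (τ.2 + n.2)))
    (f : AddMonoidAlgebra L (ℕ × ℕ)) (hf : f ≠ 0) (hfI : ↑f.coeff.support ⊆ Ibox r₁ r₂) :
    ((∀ s ∈ e.coeff.support, evalAtL f (α₁ ^ s.1) (α₂ ^ s.2) = 0) ↔
      (∀ n : ℕ × ℕ, τ.1 ≤ n.1 → τ.2 ≤ n.2 →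
        ∑ s ∈ e.coeff.support, algebraMap F L (e.coeff s) * α₁ ^ (s.1 * n.1) * α₂ ^ (s.2 * n.2) *
          evalAtL f (α₁ ^ s.1) (α₂ ^ s.2) = 0)) ∧
    ((∀ n : ℕ × ℕ, τ.1 ≤ n.1 → τ.2 ≤ n.2 →
        ∑ s ∈ e.coeff.support, algebraMap F L (e.coeff s) * α₁ ^ (s.1 * n.1) * α₂ ^ (s.2 * n.2) *
          evalAtL f (α₁ ^ s.1) (α₂ ^ s.2) = 0) ↔
      (∀ sf : ℕ × ℕ, IsLP T f sf → ∀ n : ℕ × ℕ, recEval U f sf n = 0)) := by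
  classical
  have key := recEval_eq α₁ α₂ e τ U hU f
  have hα1 : α₁ ≠ 0 := hα₁.ne_zero hr₁.ne'
  have hα2 : α₂ ≠ 0 := hα₂.ne_zero hr₂.ne'
  constructor
  · constructor
    · intro h1 n _ _
      exact Finset.sum_eq_zero fun s hs => by rw [h1 s hs, mul_zero]
    · -- (2) → (1) via linear independence of characters
      intro h2 s₀ hs₀
      -- the character family
      set v : {x // x ∈ e.coeff.support} → (Multiplicative (ℕ × ℕ) →* L) :=
        fun t => chi (α₁ ^ (t : ℕ × ℕ).1) (α₂ ^ (t : ℕ × ℕ).2) with hv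
      have hinj : Function.Injective v := by
        intro t t' h
        have hx : α₁ ^ (t : ℕ × ℕ).1 = α₁ ^ (t' : ℕ × ℕ).1 := by
          have := congrArg (fun g : Multiplicative (ℕ × ℕ) →* L =>
            g (Multiplicative.ofAdd (1, 0))) h
          simpa [hv, chi_apply'] using this
        have hy : α₂ ^ (t : ℕ × ℕ).2 = α₂ ^ (t' : ℕ × ℕ).2 := by
          have := congrArg (fun g : Multiplicative (ℕ × ℕ) →* L =>
            g (Multiplicative.ofAdd (0, 1))) h
          simpa [hv, chi_apply'] using this
        have ht := he (Finset.mem_coe.2 t.2)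
        have ht' := he (Finset.mem_coe.2 t'.2)
        have h1 := hα₁.pow_inj ht.1 ht'.1 hx
        have h2' := hα₂.pow_inj ht.2 ht'.2 hy
        exact Subtype.ext (Prod.ext h1 h2')
      have li := (linearIndependent_monoidHom (Multiplicative (ℕ × ℕ)) L).comp v hinj
      rw [linearIndependent_iff'] at li
      have hzero := li Finset.univ
        (fun t => algebraMap F L (e.coeff (t : ℕ × ℕ)) * α₁ ^ ((t : ℕ × ℕ).1 * τ.1)
          * α₂ ^ ((t : ℕ × ℕ).2 * τ.2)
          * evalAtL f (α₁ ^ (t : ℕ × ℕ).1) (α₂ ^ (t : ℕ × ℕ).2)) ?_ ⟨s₀, hs₀⟩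
        (Finset.mem_univ _)
      · have he0 : algebraMap F L (e.coeff s₀) ≠ 0 := by
          have := Finsupp.mem_support_iff.1 hs₀
          simpa [map_eq_zero] using this
        by_contra hne
        exact absurd hzero (mul_ne_zero (mul_ne_zero (mul_ne_zero he0
          (pow_ne_zero _ hα1)) (pow_ne_zero _ hα2)) hne)
      · funext m
        rw [Finset.sum_apply]
        simp only [Pi.smul_apply, smul_eq_mul, Function.comp_apply, hv, chi_apply']
        rw [Finset.sum_coe_sort e.coeff.support (fun s =>
          algebraMap F L (e.coeff s) * α₁ ^ (s.1 * τ.1) * α₂ ^ (s.2 * τ.2)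
            * evalAtL f (α₁ ^ s.1) (α₂ ^ s.2)
            * ((α₁ ^ s.1) ^ (Multiplicative.toAdd m).1
              * (α₂ ^ s.2) ^ (Multiplicative.toAdd m).2))]
        have H := h2 (τ.1 + (Multiplicative.toAdd m).1, τ.2 + (Multiplicative.toAdd m).2)
          (by simp) (by simp)
        rw [Pi.zero_apply, ← H]
        refine Finset.sum_congr rfl fun s _ => ?_
        ring
  · constructor
    · -- (2) → (3)
      intro h2 sf _ n
      by_cases hc : sf.1 ≤ n.1 ∧ sf.2 ≤ n.2
      · rw [key sf n hc.1 hc.2]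
        exact h2 (τ.1 + n.1 - sf.1, τ.2 + n.2 - sf.2) (by omega) (by omega)
      · unfold recEval; rw [if_neg hc]
    · -- (3) → (2)
      intro h3 n hn1 hn2
      obtain ⟨sf, hmem, hmax⟩ := finset_exists_max T f.coeff.support
        (Finsupp.support_nonempty_iff.2 (AddMonoidAlgebra.coeff_eq_zero.not.2 hf))
      have h := h3 sf ⟨hmem, hmax⟩ (sf.1 + (n.1 - τ.1), sf.2 + (n.2 - τ.2))
      rw [key sf _ (Nat.le_add_right _ _) (Nat.le_add_right _ _)] at h
      have ea : τ.1 + (sf.1 + (n.1 - τ.1)) - sf.1 = n.1 := by omega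
      have eb : τ.2 + (sf.2 + (n.2 - τ.2)) - sf.2 = n.2 := by omega
      simpa [ea, eb] using h
end

section
/- Let L be a field, r₁, r₂ positive integers, α₁ ∈ L a primitive r₁-th root of unity, α₂ ∈ L a primitive r₂-th root of unity, and τ ∈ ℕ×ℕ. If e' ∈ L[X₁,X₂] has supp(e') ⊆ {0,…,r₁−1}×{0,…,r₂−1} and e'(α₁^{n₁}, α₂^{n₂}) = 0 for all n ∈ ℕ×ℕ with τ ⪯ n (componentwise), then e' = 0. -/
open Polynomial in
lemma key_vanish {L : Type*} [Field L] {r : ℕ} (hr : 0 < r) {α : L}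
    (hα : IsPrimitiveRoot α r) (s : Finset ℕ) (hs : ∀ i ∈ s, i < r) (c : ℕ → L)
    (h : ∀ a : ℕ, ∑ i ∈ s, c i * (α ^ a) ^ i = 0) : ∀ i ∈ s, c i = 0 := by
  classical
  set P : L[X] := ∑ i ∈ s, Polynomial.C (c i) * Polynomial.X ^ i with hP
  have heval : ∀ x : L, P.eval x = ∑ i ∈ s, c i * x ^ i := by
    intro x; simp [hP, Polynomial.eval_finset_sum]
  have hdeg : P.natDegree < r := by
    have h1 : P.natDegree ≤ r - 1 := Polynomial.natDegree_sum_le_of_forall_le s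
      (fun i => Polynomial.C (c i) * Polynomial.X ^ i)
      (fun i hi => le_trans (Polynomial.natDegree_C_mul_le _ _)
        (by simpa using Nat.le_sub_one_of_lt (hs i hi)))
    omega
  have hP0 : P = 0 := by
    apply Polynomial.eq_zero_of_natDegree_lt_card_of_eval_eq_zero P
      (f := fun a : Fin r => α ^ (a : ℕ))
      (fun a b hab => Fin.ext (hα.pow_inj a.2 b.2 hab))
      (fun a => by rw [heval]; exact h a)
    simpa using hdeg
  intro i hi
  have : P.coeff i = c i := by
    rw [hP, Polynomial.finset_sum_coeff]
    simp only [Polynomial.coeff_C_mul, Polynomial.coeff_X_pow]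
    rw [Finset.sum_congr rfl (fun j _ => by rw [mul_ite, mul_one, mul_zero]),
      Finset.sum_ite_eq s i c]
    simp [hi]
  rw [hP0] at this; simpa using this.symm

/-- a polynomial supported in `{0,…,r₁−1}×{0,…,r₂−1}` vanishing at all
points `(α₁^{n₁}, α₂^{n₂})` with `τ ⪯ n` is zero. -/
theorem stmt_7 {L : Type*} [Field L] (r₁ r₂ : ℕ) (hr₁ : 0 < r₁) (hr₂ : 0 < r₂)
    (α₁ α₂ : L) (hα₁ : IsPrimitiveRoot α₁ r₁) (hα₂ : IsPrimitiveRoot α₂ r₂)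
    (τ : ℕ × ℕ) (e' : AddMonoidAlgebra L (ℕ × ℕ)) (hsupp : ↑e'.coeff.support ⊆ Ibox r₁ r₂)
    (hvan : ∀ n : ℕ × ℕ, τ.1 ≤ n.1 → τ.2 ≤ n.2 →
      evalAtL e' (α₁ ^ n.1) (α₂ ^ n.2) = 0) :
    e' = 0 := by
  classical
  have hall : ∀ a b : ℕ, ∑ m ∈ e'.coeff.support, e'.coeff m * (α₁ ^ a) ^ m.1 * (α₂ ^ b) ^ m.2 = 0 := by
    intro a b
    have h1 : α₁ ^ (a + r₁ * τ.1) = α₁ ^ a := by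
      rw [pow_add, pow_mul, hα₁.pow_eq_one, one_pow, mul_one]
    have h2 : α₂ ^ (b + r₂ * τ.2) = α₂ ^ b := by
      rw [pow_add, pow_mul, hα₂.pow_eq_one, one_pow, mul_one]
    have := hvan (a + r₁ * τ.1, b + r₂ * τ.2)
      (le_trans (Nat.le_mul_of_pos_left τ.1 hr₁) (Nat.le_add_left _ _))
      (le_trans (Nat.le_mul_of_pos_left τ.2 hr₂) (Nat.le_add_left _ _))
    simp only [evalAtL] at this
    rw [h1, h2] at this
    exact this
  -- Stage 1: group by first coordinate
  have stage1 : ∀ i ∈ e'.coeff.support.image Prod.fst, ∀ b : ℕ,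
      ∑ m ∈ e'.coeff.support.filter (fun m => m.1 = i), e'.coeff m * (α₂ ^ b) ^ m.2 = 0 := by
    intro i hi b
    refine key_vanish hr₁ hα₁ (e'.coeff.support.image Prod.fst)
      (fun i' hi' => by
        obtain ⟨m, hm, rfl⟩ := Finset.mem_image.mp hi'
        exact (hsupp hm).1)
      (fun i' => ∑ m ∈ e'.coeff.support.filter (fun m => m.1 = i'), e'.coeff m * (α₂ ^ b) ^ m.2)
      (fun a => ?_) i hi
    calc ∑ i' ∈ e'.coeff.support.image Prod.fst,
          (∑ m ∈ e'.coeff.support.filter (fun m => m.1 = i'), e'.coeff m * (α₂ ^ b) ^ m.2) * (α₁ ^ a) ^ i'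
        = ∑ m ∈ e'.coeff.support, e'.coeff m * (α₁ ^ a) ^ m.1 * (α₂ ^ b) ^ m.2 := by
          rw [← Finset.sum_fiberwise_of_maps_to
            (fun m hm => Finset.mem_image_of_mem Prod.fst hm)
            (fun m => e'.coeff m * (α₁ ^ a) ^ m.1 * (α₂ ^ b) ^ m.2)]
          refine Finset.sum_congr rfl fun i' _ => ?_
          rw [Finset.sum_mul]
          refine Finset.sum_congr rfl fun m hm => ?_
          have : m.1 = i' := (Finset.mem_filter.mp hm).2
          rw [← this]; ring
      _ = 0 := hall a b
  -- Stage 2: group by second coordinate, conclude each coefficient vanishes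
  have h2 : ∀ m ∈ e'.coeff.support, e'.coeff m = 0 := by
    intro m hm
    have hi : m.1 ∈ e'.coeff.support.image Prod.fst := Finset.mem_image_of_mem _ hm
    set t := e'.coeff.support.filter (fun m' => m'.1 = m.1) with ht
    have hmt : m ∈ t := Finset.mem_filter.mpr ⟨hm, rfl⟩
    have key2 := key_vanish hr₂ hα₂ (t.image Prod.snd)
      (fun j hj => by
        obtain ⟨m', hm', rfl⟩ := Finset.mem_image.mp hj
        exact (hsupp (Finset.mem_filter.mp hm').1).2)
      (fun j => ∑ m' ∈ t.filter (fun m' => m'.2 = j), e'.coeff m')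
      (fun b => by
        calc ∑ j ∈ t.image Prod.snd,
              (∑ m' ∈ t.filter (fun m' => m'.2 = j), e'.coeff m') * (α₂ ^ b) ^ j
            = ∑ m' ∈ t, e'.coeff m' * (α₂ ^ b) ^ m'.2 := by
              rw [← Finset.sum_fiberwise_of_maps_to
                (fun m' hm' => Finset.mem_image_of_mem Prod.snd hm')
                (fun m' => e'.coeff m' * (α₂ ^ b) ^ m'.2)]
              refine Finset.sum_congr rfl fun j _ => ?_
              rw [Finset.sum_mul]
              refine Finset.sum_congr rfl fun m' hm' => ?_
              rw [(Finset.mem_filter.mp hm').2]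
          _ = 0 := stage1 m.1 hi b)
      m.2 (Finset.mem_image_of_mem _ hmt)
    have hsingle : t.filter (fun m' => m'.2 = m.2) = {m} := by
      ext m'
      simp only [ht, Finset.mem_filter, Finset.mem_singleton]
      constructor
      · rintro ⟨⟨_, h1⟩, h2⟩; exact Prod.ext h1 h2
      · rintro rfl; exact ⟨⟨hm, rfl⟩, rfl⟩
    simpa [hsingle] using key2
  ext m
  by_cases hmem : m ∈ e'.coeff.support
  · simpa using h2 m hmem
  · simpa using Finsupp.notMem_support_iff.mp hmem
end

section
/- Let U be the syndrome table afforded by e and τ, with ω(e) ≤ t, 1 ≤ t ≤ ⌊r₁/2⌋ and t ≤ ⌊r₂/2⌋. Let l = (a, t−a+1) with 0 < a ≤ t, let F be a minimal set of polynomials for u^l with delta-set Δ = Δ(F), and suppose some f ∈ F satisfies f[U]_l ≠ 0. Then l ∉ LP(F) + Δ (there are no g ∈ F and δ ∈ Δ with l = LP(g) + δ), and hence no n ∈ ℕ×ℕ with l ⪯ n belongs to Δ + LP(F). -/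
lemma exists_T_max (T : MonomialOrder2) (S : Finset (ℕ × ℕ)) (h : S.Nonempty) :
    ∃ s ∈ S, ∀ m ∈ S, T.le m s := by
  classical
  induction S using Finset.induction_on with
  | empty => exact absurd h (by simp)
  | @insert a S' ha ih =>
    rcases S'.eq_empty_or_nonempty with h' | h'
    · subst h'
      exact ⟨a, by simp, by simpa using T.le_refl a⟩
    · obtain ⟨s, hsS, hs⟩ := ih h'
      rcases T.le_total a s with hle | hle
      · exact ⟨s, by simp [hsS], by
          intro m hm
          rcases Finset.mem_insert.mp hm with rfl | hm
          · exact hle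
          · exact hs m hm⟩
      · exact ⟨a, by simp, by
          intro m hm
          rcases Finset.mem_insert.mp hm with rfl | hm
          · exact T.le_refl _
          · exact T.le_trans _ _ _ (hs m hm) hle⟩


lemma arith0 (d1 d2 x0 : ℕ) (h2 : 1 ≤ d2) (h0 : d1 + 1 ≤ x0) :
    x0 + d1 + d2 ≤ (d1+1)*(d2+1) + (x0 - (d1+1)) * 1 := by
  obtain ⟨c, rfl⟩ : ∃ c, x0 = d1+1+c := ⟨x0-(d1+1), by omega⟩
  obtain ⟨v, rfl⟩ : ∃ v, d2 = v+1 := ⟨d2-1, by omega⟩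
  have h : (d1+1)*(v+1+1) = d1*v + 2*d1 + v + 2 := by ring
  omega

lemma arith1 (d1 d2 xk yk1 yd : ℕ) (h1 : 1 ≤ d1) (hxk : d1 + 1 ≤ xk)
    (hyk : d2 + 1 ≤ yk1) (hyd : yk1 ≤ yd) :
    d1 + (yd + d2) ≤ xk * yk1 + 1 * (yd - yk1) := by
  obtain ⟨c, rfl⟩ : ∃ c, xk = d1+1+c := ⟨xk-(d1+1), by omega⟩
  obtain ⟨w, rfl⟩ : ∃ w, yk1 = d2+1+w := ⟨yk1-(d2+1), by omega⟩
  obtain ⟨u, rfl⟩ : ∃ u, d1 = u+1 := ⟨d1-1, by omega⟩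
  have h : (u+1+1+c)*(d2+1+w) = u*d2 + u*w + c*d2 + c*w + u + c + 2*d2 + 2*w + 2 := by ring
  omega

lemma arith2 (d1 d2 xj yj : ℕ) (hx : 1 ≤ xj) (hy : 1 ≤ yj) (hc : yj ≤ d2) :
    (xj + d1) + (yj + d2) ≤ (xj+1) * yj + (d1+1) * (d2 + 1 - yj) := by
  obtain ⟨S2, hS2⟩ : ∃ S2, d2 + 1 - yj = S2 + 1 := ⟨d2-yj, by omega⟩
  obtain ⟨u, rfl⟩ : ∃ u, xj = u+1 := ⟨xj-1, by omega⟩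
  obtain ⟨v, rfl⟩ : ∃ v, yj = v+1 := ⟨yj-1, by omega⟩
  rw [hS2]
  have h1 : (u+1+1)*(v+1) = u*v + u + 2*v + 2 := by ring
  have h2 : (d1+1)*(S2+1) = d1*S2 + d1 + S2 + 1 := by ring
  omega

lemma arith3 (d1 d2 xj yj : ℕ) (hx : 1 ≤ xj) (hy : 1 ≤ yj) (hc : xj ≤ d1) :
    (xj + d1) + (yj + d2) ≤ xj * (yj+1) + (d1 + 1 - xj) * (d2+1) := by
  obtain ⟨S2, hS2⟩ : ∃ S2, d1 + 1 - xj = S2 + 1 := ⟨d1-xj, by omega⟩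
  obtain ⟨u, rfl⟩ : ∃ u, xj = u+1 := ⟨xj-1, by omega⟩
  obtain ⟨v, rfl⟩ : ∃ v, yj = v+1 := ⟨yj-1, by omega⟩
  rw [hS2]
  have h1 : (u+1)*(v+1+1) = u*v + 2*u + v + 2 := by ring
  have h2 : (S2+1)*(d2+1) = S2*d2 + S2 + d2 + 1 := by ring
  omega

lemma arith4 (d1 d2 xj yj : ℕ) (h1 : d1 + 1 ≤ xj) (h2 : d2 + 1 ≤ yj) :
    (xj + d1) + (yj + d2) ≤ xj * (yj+1) + 1 * yj := by
  obtain ⟨u, rfl⟩ : ∃ u, xj = d1+1+u := ⟨xj-(d1+1), by omega⟩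
  obtain ⟨v, rfl⟩ : ∃ v, yj = d2+1+v := ⟨yj-(d2+1), by omega⟩
  have h : (d1+1+u)*(d2+1+v+1) = d1*d2 + d1*v + u*d2 + u*v + 2*d1 + 2*u + d2 + v + 2 := by ring
  omega

lemma comb (d : ℕ) (s : ℕ → ℕ × ℕ) (hdp : IsDefPoints d s) (n : ℕ × ℕ)
    (hn1 : 1 ≤ n.1) (hn2 : 1 ≤ n.2) (j : ℕ) (hj : j < d) (δ : ℕ × ℕ)
    (hδ : δ ∈ deltaSet d s) (heq : n = s j + δ) :
    ∃ S : Finset (ℕ × ℕ), (∀ p ∈ S, p ∈ deltaSet d s) ∧ n.1 + n.2 ≤ S.card := by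
  obtain ⟨hd0, hx, hy, hxlast, hy0⟩ := hdp
  obtain ⟨k, hk, hk1, hk2⟩ := hδ
  have hn1' : n.1 = (s j).1 + δ.1 := by rw [heq]; rfl
  have hn2' : n.2 = (s j).2 + δ.2 := by rw [heq]; rfl
  have hd2 : 2 ≤ d := by omega
  rcases eq_or_ne j 0 with rfl | hj0
  · -- case j = 0
    have hδ2 : 1 ≤ δ.2 := by omega
    have hx0 : δ.1 + 1 ≤ (s 0).1 := by
      rcases eq_or_ne k 0 with rfl | hk0
      · exact hk1
      · have := hx 0 k (by omega) (by omega); omega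
    refine ⟨(Finset.range (δ.1+1) ×ˢ Finset.range (δ.2+1)) ∪
      (Finset.Ico (δ.1+1) (s 0).1 ×ˢ Finset.range 1), ?_, ?_⟩
    · intro p hp
      rcases Finset.mem_union.mp hp with hp | hp
      · simp only [Finset.mem_product, Finset.mem_range] at hp
        exact ⟨k, hk, by omega, by omega⟩
      · simp only [Finset.mem_product, Finset.mem_Ico, Finset.mem_range] at hp
        refine ⟨0, by omega, by omega, ?_⟩
        rw [show (0:ℕ)+1 = 1 from rfl]
        have := hy 0 1 (by omega) (by omega); omega
    · rw [Finset.card_union_of_disjoint, Finset.card_product, Finset.card_product]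
      · simp only [Finset.card_range, Nat.card_Ico]
        have := arith0 δ.1 δ.2 (s 0).1 hδ2 hx0
        omega
      · rw [Finset.disjoint_left]
        intro p hp hp'
        simp only [Finset.mem_product, Finset.mem_range] at hp
        simp only [Finset.mem_product, Finset.mem_Ico, Finset.mem_range] at hp'
        omega
  rcases eq_or_ne j (d-1) with rfl | hjd
  · -- case j = d - 1
    have hxj : (s (d-1)).1 = 0 := hxlast
    have hδ1 : 1 ≤ δ.1 := by omega
    have hyk : (s (k+1)).2 ≤ (s (d-1)).2 := by
      rcases eq_or_ne (k+1) (d-1) with h | h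
      · rw [h]
      · exact le_of_lt (hy (k+1) (d-1) (by omega) (by omega))
    refine ⟨(Finset.range (s k).1 ×ˢ Finset.range (s (k+1)).2) ∪
      (Finset.range 1 ×ˢ Finset.Ico (s (k+1)).2 (s (d-1)).2), ?_, ?_⟩
    · intro p hp
      rcases Finset.mem_union.mp hp with hp | hp
      · simp only [Finset.mem_product, Finset.mem_range] at hp
        exact ⟨k, hk, by omega, by omega⟩
      · simp only [Finset.mem_product, Finset.mem_Ico, Finset.mem_range] at hp
        refine ⟨d-2, by omega, ?_, ?_⟩
        · have := hx (d-2) (d-1) (by omega) (by omega); omega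
        · rw [show d - 2 + 1 = d - 1 by omega]; omega
    · rw [Finset.card_union_of_disjoint, Finset.card_product, Finset.card_product]
      · simp only [Finset.card_range, Nat.card_Ico]
        have := arith1 δ.1 δ.2 (s k).1 (s (k+1)).2 (s (d-1)).2 hδ1 hk1 hk2 hyk
        omega
      · rw [Finset.disjoint_left]
        intro p hp hp'
        simp only [Finset.mem_product, Finset.mem_range] at hp
        simp only [Finset.mem_product, Finset.mem_Ico, Finset.mem_range] at hp'
        omega
  -- case 0 < j < d - 1
  have hj1 : 1 ≤ j := by omega
  have hjd2 : j + 1 < d := by omega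
  have hxj1 : 1 ≤ (s j).1 := by have := hx j (d-1) (by omega) (by omega); omega
  have hyj1 : 1 ≤ (s j).2 := by have := hy 0 j (by omega) (by omega); omega
  rcases le_or_gt (s j).2 δ.2 with hc | hc
  · -- case I : y_j ≤ δ₂
    refine ⟨(Finset.range ((s j).1+1) ×ˢ Finset.range (s j).2) ∪
      (Finset.range (δ.1+1) ×ˢ Finset.Ico (s j).2 (δ.2+1)), ?_, ?_⟩
    · intro p hp
      rcases Finset.mem_union.mp hp with hp | hp
      · simp only [Finset.mem_product, Finset.mem_range] at hp
        refine ⟨j-1, by omega, ?_, ?_⟩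
        · have := hx (j-1) j (by omega) (by omega); omega
        · rw [show j - 1 + 1 = j by omega]; omega
      · simp only [Finset.mem_product, Finset.mem_Ico, Finset.mem_range] at hp
        exact ⟨k, hk, by omega, by omega⟩
    · rw [Finset.card_union_of_disjoint, Finset.card_product, Finset.card_product]
      · simp only [Finset.card_range, Nat.card_Ico]
        have := arith2 δ.1 δ.2 (s j).1 (s j).2 hxj1 hyj1 hc
        omega
      · rw [Finset.disjoint_left]
        intro p hp hp'
        simp only [Finset.mem_product, Finset.mem_range] at hp
        simp only [Finset.mem_product, Finset.mem_Ico, Finset.mem_range] at hp'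
        omega
  rcases le_or_gt (s j).1 δ.1 with hc' | hc'
  · -- case IIa : x_j ≤ δ₁, δ₂ < y_j
    refine ⟨(Finset.range (s j).1 ×ˢ Finset.range ((s j).2+1)) ∪
      (Finset.Ico (s j).1 (δ.1+1) ×ˢ Finset.range (δ.2+1)), ?_, ?_⟩
    · intro p hp
      rcases Finset.mem_union.mp hp with hp | hp
      · simp only [Finset.mem_product, Finset.mem_range] at hp
        exact ⟨j, by omega, by omega, by have := hy j (j+1) (by omega) (by omega); omega⟩
      · simp only [Finset.mem_product, Finset.mem_Ico, Finset.mem_range] at hp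
        exact ⟨k, hk, by omega, by omega⟩
    · rw [Finset.card_union_of_disjoint, Finset.card_product, Finset.card_product]
      · simp only [Finset.card_range, Nat.card_Ico]
        have := arith3 δ.1 δ.2 (s j).1 (s j).2 hxj1 hyj1 hc'
        omega
      · rw [Finset.disjoint_left]
        intro p hp hp'
        simp only [Finset.mem_product, Finset.mem_range] at hp
        simp only [Finset.mem_product, Finset.mem_Ico, Finset.mem_range] at hp'
        omega
  · -- case IIb : δ₁ < x_j, δ₂ < y_j
    refine ⟨(Finset.range (s j).1 ×ˢ Finset.range ((s j).2+1)) ∪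
      (Finset.Ico (s j).1 ((s j).1+1) ×ˢ Finset.range (s j).2), ?_, ?_⟩
    · intro p hp
      rcases Finset.mem_union.mp hp with hp | hp
      · simp only [Finset.mem_product, Finset.mem_range] at hp
        exact ⟨j, by omega, by omega, by have := hy j (j+1) (by omega) (by omega); omega⟩
      · simp only [Finset.mem_product, Finset.mem_Ico, Finset.mem_range] at hp
        refine ⟨j-1, by omega, ?_, ?_⟩
        · have := hx (j-1) j (by omega) (by omega); omega
        · rw [show j - 1 + 1 = j by omega]; omega
    · rw [Finset.card_union_of_disjoint, Finset.card_product, Finset.card_product]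
      · simp only [Finset.card_range, Nat.card_Ico]
        have := arith4 δ.1 δ.2 (s j).1 (s j).2 (by omega) (by omega)
        rw [show (s j).1 + 1 - (s j).1 = 1 by omega]
        omega
      · rw [Finset.disjoint_left]
        intro p hp hp'
        simp only [Finset.mem_product, Finset.mem_range] at hp
        simp only [Finset.mem_product, Finset.mem_Ico, Finset.mem_range] at hp'
        omega


/-- if `l = (a, t−a+1)` with `0 < a ≤ t` and some `f ∈ F` has
`f[U]_l ≠ 0`, then `l ∉ LP(F) + Δ`, and no `n ⪰ l` lies in `Δ + LP(F)`. -/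
theorem stmt_9 (T : MonomialOrder2) {F L : Type*} [Field F] [Fintype F] [Field L]
    [Algebra F L] (r₁ r₂ t : ℕ) (ht : 1 ≤ t) (ht₁ : t ≤ r₁ / 2) (ht₂ : t ≤ r₂ / 2)
    (hq : Nat.Coprime (r₁ * r₂) (Fintype.card F))
    (α₁ α₂ : L) (hα₁ : IsPrimitiveRoot α₁ r₁) (hα₂ : IsPrimitiveRoot α₂ r₂)
    (e : AddMonoidAlgebra F (ℕ × ℕ)) (he : ↑e.coeff.support ⊆ Ibox r₁ r₂)
    (hω : e.coeff.support.card ≤ t)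
    (τ : ℕ × ℕ) (hτ : τ ∈ Ibox r₁ r₂) (U : ℕ × ℕ → L)
    (hU : ∀ n : ℕ × ℕ, U n = evalAt e (α₁ ^ (τ.1 + n.1)) (α₂ ^ (τ.2 + n.2)))
    (a : ℕ) (ha : 0 < a) (hat : a ≤ t)
    (d : ℕ) (s : ℕ → ℕ × ℕ) (f : ℕ → AddMonoidAlgebra L (ℕ × ℕ))
    (hmin : IsMinimalSet T U (a, t - a + 1) d s f)
    (hex : ∃ i, i < d ∧ recEval U (f i) (s i) (a, t - a + 1) ≠ 0) :
    (∀ j, j < d → ∀ δ ∈ deltaSet d s, (a, t - a + 1) ≠ s j + δ) ∧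
      (∀ n : ℕ × ℕ, a ≤ n.1 → t - a + 1 ≤ n.2 →
        ∀ j, j < d → ∀ δ ∈ deltaSet d s, n ≠ s j + δ) := by
  classical
  obtain ⟨hdp, hFmem, hminimal⟩ := hmin
  have key : ∀ n : ℕ × ℕ, a ≤ n.1 → t - a + 1 ≤ n.2 →
      ∀ j, j < d → ∀ δ ∈ deltaSet d s, n ≠ s j + δ := by
    intro n hna hnb j hj δ hδ heq
    obtain ⟨S, hSdel, hScard⟩ := comb d s hdp n (by omega) (by omega) j hj δ hδ heq
    have hcard : e.coeff.support.card < S.card := by omega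
    set w : (ℕ × ℕ) → (ℕ × ℕ) → L := fun p m => α₁ ^ (p.1 * m.1) * α₂ ^ (p.2 * m.2) with hw
    have hdep : ¬ LinearIndependent L
        (fun (m : {x // x ∈ S}) => (fun p : {x // x ∈ e.coeff.support} => w p.1 m.1)) := by
      intro hli
      have h1 := hli.fintype_card_le_finrank
      rw [Module.finrank_fintype_fun_eq_card] at h1
      simp only [Fintype.card_coe] at h1
      omega
    obtain ⟨c, hcsum, i₀, hi₀⟩ := Fintype.not_linearIndependent_iff.mp hdep
    have hzero : ∀ p, (hp : p ∈ e.coeff.support) → (∑ m ∈ S.attach, c m * w p m.1) = 0 := by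
      intro p hp
      have h2 := congrFun hcsum ⟨p, hp⟩
      simpa [Finset.sum_apply, Finset.univ_eq_attach] using h2
    set G : AddMonoidAlgebra L (ℕ × ℕ) := ∑ m ∈ S.attach, AddMonoidAlgebra.single m.1 (c m) with hG
    have hGapp : ∀ q : ℕ × ℕ, G.coeff q = if hq : q ∈ S then c ⟨q, hq⟩ else 0 := by
      intro q
      rw [hG, AddMonoidAlgebra.coeff_sum, Finsupp.finset_sum_apply]
      by_cases hq : q ∈ S
      · rw [dif_pos hq]
        rw [Finset.sum_eq_single (⟨q, hq⟩ : {x // x ∈ S})]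
        · simp
        · intro b _ hbne
          exact Finsupp.single_eq_of_ne' (fun hbq => hbne (Subtype.ext hbq))
        · intro habs; exact absurd (Finset.mem_attach _ _) habs
      · rw [dif_neg hq]
        apply Finset.sum_eq_zero
        intro b _
        exact Finsupp.single_eq_of_ne' (fun hbq => hq (hbq ▸ b.2))
    have hGsupp : G.coeff.support ⊆ S := by
      intro q hq
      by_contra hqS
      have := Finsupp.mem_support_iff.mp hq
      rw [hGapp q, dif_neg hqS] at this
      exact this rfl
    have hGne : G ≠ 0 := by
      intro h0
      apply hi₀
      have := hGapp i₀.1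
      rw [dif_pos i₀.2] at this
      rw [h0] at this
      simpa using this.symm
    have hval : ∀ s₀ n₀ : ℕ × ℕ, recEval U G s₀ n₀ = 0 := by
      intro s₀ n₀
      unfold recEval
      split
      next h =>
        obtain ⟨h1, h2⟩ := h
        have step1 : ∑ m ∈ G.coeff.support, G.coeff m * U (m + n₀ - s₀)
            = ∑ m ∈ S, G.coeff m * U (m + n₀ - s₀) := by
          apply Finset.sum_subset hGsupp
          intro q _ hqns
          have hq0 : G.coeff q = 0 := by
            by_contra hne; exact hqns (Finsupp.mem_support_iff.mpr hne)
          rw [hq0, zero_mul]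
        have step2 : ∀ m : ℕ × ℕ, U (m + n₀ - s₀) =
            ∑ p ∈ e.coeff.support, (algebraMap F L (e.coeff p) * α₁ ^ ((τ.1 + (n₀.1 - s₀.1)) * p.1)
              * α₂ ^ ((τ.2 + (n₀.2 - s₀.2)) * p.2)) * w p m := by
          intro m
          rw [hU]
          unfold evalAt
          apply Finset.sum_congr rfl
          intro p _
          have e1 : (m + n₀ - s₀).1 = m.1 + (n₀.1 - s₀.1) := by
            show m.1 + n₀.1 - s₀.1 = _
            omega
          have e2 : (m + n₀ - s₀).2 = m.2 + (n₀.2 - s₀.2) := by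
            show m.2 + n₀.2 - s₀.2 = _
            omega
          rw [e1, e2, hw]
          rw [← pow_mul, ← pow_mul]
          rw [show (τ.1 + (m.1 + (n₀.1 - s₀.1))) * p.1
              = (τ.1 + (n₀.1 - s₀.1)) * p.1 + p.1 * m.1 by ring]
          rw [show (τ.2 + (m.2 + (n₀.2 - s₀.2))) * p.2
              = (τ.2 + (n₀.2 - s₀.2)) * p.2 + p.2 * m.2 by ring]
          rw [pow_add, pow_add]
          ring
        rw [step1]
        calc ∑ m ∈ S, G.coeff m * U (m + n₀ - s₀)
            = ∑ m ∈ S, ∑ p ∈ e.coeff.support, (algebraMap F L (e.coeff p)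
                * α₁ ^ ((τ.1 + (n₀.1 - s₀.1)) * p.1)
                * α₂ ^ ((τ.2 + (n₀.2 - s₀.2)) * p.2)) * (G.coeff m * w p m) := by
              apply Finset.sum_congr rfl
              intro m _
              rw [step2 m, Finset.mul_sum]
              apply Finset.sum_congr rfl
              intro p _
              ring
          _ = ∑ p ∈ e.coeff.support, (algebraMap F L (e.coeff p)
                * α₁ ^ ((τ.1 + (n₀.1 - s₀.1)) * p.1)
                * α₂ ^ ((τ.2 + (n₀.2 - s₀.2)) * p.2)) * ∑ m ∈ S, G.coeff m * w p m := by
              rw [Finset.sum_comm]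
              apply Finset.sum_congr rfl
              intro p _
              rw [Finset.mul_sum]
          _ = 0 := by
              apply Finset.sum_eq_zero
              intro p hp
              have hin : ∑ m ∈ S, G.coeff m * w p m = 0 := by
                rw [← Finset.sum_attach S (fun m => G.coeff m * w p m)]
                rw [← hzero p hp]
                apply Finset.sum_congr rfl
                intro m _
                rw [hGapp m.1, dif_pos m.2]
              rw [hin, mul_zero]
      next => rfl
    have hsupne : G.coeff.support.Nonempty := Finsupp.support_nonempty_iff.mpr (by rwa [Ne, AddMonoidAlgebra.coeff_eq_zero])
    obtain ⟨sG, hsGmem, hsGmax⟩ := exists_T_max T G.coeff.support hsupne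
    exact hminimal G sG ⟨hsGmem, hsGmax⟩ (hSdel sG (hGsupp hsGmem))
      ⟨hGne, fun s₀ n₀ _ _ _ _ => hval s₀ n₀⟩
  exact ⟨fun j hj δ hδ => key (a, t - a + 1) (le_refl a) (le_refl _) j hj δ hδ, key⟩
end

section
/- Let L be a field, r₁, r₂ positive integers, U : ℕ×ℕ → L a doubly periodic array of period r₁×r₂, and l ∈ ℕ×ℕ. If F is a minimal set of polynomials for u^l, then there exists a minimal set of polynomials F' for u^l with the same leading exponents (LP(F') = LP(F), hence the same delta-set Δ) such that for every f ∈ F' and every m ∈ supp(f) with m ≠ LP(f), one has m ∈ Δ. -/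
section Proof

namespace Stmt12

variable {L : Type*} [Field L] (T : MonomialOrder2)

lemma Tlt_of_le_of_lt {a b c : ℕ × ℕ} (h1 : T.le a b) (h2 : T.lt b c) : T.lt a c :=
  ⟨T.le_trans _ _ _ h1 h2.1, fun h => h2.2 (T.le_antisymm _ _ h2.1 (h ▸ h1))⟩

lemma Tlt_of_lt_of_le {a b c : ℕ × ℕ} (h1 : T.lt a b) (h2 : T.le b c) : T.lt a c :=
  ⟨T.le_trans _ _ _ h1.1 h2, fun h => h1.2 (T.le_antisymm _ _ h1.1 (by rw [h]; exact h2))⟩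

lemma exists_max (B : Finset (ℕ × ℕ)) (hB : B.Nonempty) :
    ∃ m ∈ B, ∀ p ∈ B, T.le p m := by
  classical
  induction B using Finset.induction_on with
  | empty => exact absurd hB (by simp)
  | @insert a B ha ih =>
    rcases B.eq_empty_or_nonempty with rfl | hB'
    · exact ⟨a, by simp, by simp [T.le_refl]⟩
    · obtain ⟨m, hm, hmax⟩ := ih hB'
      rcases T.le_total a m with h | h
      · refine ⟨m, Finset.mem_insert_of_mem hm, ?_⟩
        intro p hp
        rcases Finset.mem_insert.mp hp with rfl | hp
        · exact h
        · exact hmax p hp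
      · refine ⟨a, Finset.mem_insert_self _ _, ?_⟩
        intro p hp
        rcases Finset.mem_insert.mp hp with rfl | hp
        · exact T.le_refl _
        · exact T.le_trans _ _ _ (hmax p hp) h

lemma staircase {d : ℕ} {ss : ℕ → ℕ × ℕ} (hdp : IsDefPoints d ss) {m : ℕ × ℕ}
    (hm : m ∉ deltaSet d ss) :
    ∃ i, i < d ∧ (ss i).1 ≤ m.1 ∧ (ss i).2 ≤ m.2 := by
  classical
  obtain ⟨hd, hdec, hinc, h1, h2⟩ := hdp
  set i := Nat.findGreatest (fun j => (ss j).2 ≤ m.2) (d - 1) with hi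
  have hPi : (ss i).2 ≤ m.2 :=
    Nat.findGreatest_spec (P := fun j => (ss j).2 ≤ m.2) (Nat.zero_le _) (by simp [h2])
  have hid : i ≤ d - 1 := Nat.findGreatest_le _
  refine ⟨i, by omega, ?_, hPi⟩
  by_cases hcase : i = d - 1
  · rw [hcase, h1]
    exact Nat.zero_le _
  · have hsucc : ¬ ((ss (i + 1)).2 ≤ m.2) :=
      Nat.findGreatest_is_greatest (P := fun j => (ss j).2 ≤ m.2) (n := d - 1) (by omega) (by omega)
    by_contra hx
    exact hm ⟨i, by omega, by omega, by omega⟩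

noncomputable def E (U : ℕ × ℕ → L) (f : AddMonoidAlgebra L (ℕ × ℕ)) (s n : ℕ × ℕ) : L :=
  f.coeff.sum fun p c => c * U (p + n - s)

lemma recEval_eq_E {U : ℕ × ℕ → L} {f : AddMonoidAlgebra L (ℕ × ℕ)} {s n : ℕ × ℕ}
    (h1 : s.1 ≤ n.1) (h2 : s.2 ≤ n.2) : recEval U f s n = E U f s n := by
  rw [recEval, if_pos ⟨h1, h2⟩]; rfl

lemma isLP_unique {f : AddMonoidAlgebra L (ℕ × ℕ)} {s s' : ℕ × ℕ}
    (h : IsLP T f s) (h' : IsLP T f s') : s = s' :=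
  T.le_antisymm _ _ (h'.2 _ h.1) (h.2 _ h'.1)

/-- One reduction step: kill the monomial `m'` of `g` using a suitable member of the family. -/
lemma step {U : ℕ × ℕ → L} {l : ℕ × ℕ} {d : ℕ} {ss : ℕ → ℕ × ℕ}
    (hdp : IsDefPoints d ss)
    {f0 : ℕ → AddMonoidAlgebra L (ℕ × ℕ)}
    (hf0 : ∀ j, j < d → f0 j ∈ Lambda T U l ∧ IsLP T (f0 j) (ss j))
    {g : AddMonoidAlgebra L (ℕ × ℕ)} {si : ℕ × ℕ}
    (hgΛ : g ∈ Lambda T U l) (hgLP : IsLP T g si)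
    {m' : ℕ × ℕ} (hm's : m' ∈ g.coeff.support) (hm'ne : m' ≠ si) (hm'Δ : m' ∉ deltaSet d ss) :
    ∃ g₁, g₁ ∈ Lambda T U l ∧ IsLP T g₁ si ∧
      ∀ p ∈ g₁.coeff.support, p ≠ m' ∧ (p ∈ g.coeff.support ∨ T.lt p m') := by
  classical
  obtain ⟨i0, hi0d, hsh1, hsh2⟩ := staircase hdp hm'Δ
  obtain ⟨hhΛ, hhLP⟩ := hf0 i0 hi0d
  set h := f0 i0 with hh
  set sh := ss i0 with hshdef
  have hlc : h.coeff sh ≠ 0 := Finsupp.mem_support_iff.mp hhLP.1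
  set k : ℕ × ℕ := m' - sh with hk
  have hksh : k + sh = m' := by
    have := hsh1; have := hsh2
    ext <;> simp [hk] <;> omega
  set c : L := g.coeff m' * (h.coeff sh)⁻¹ with hc
  set G : AddMonoidAlgebra L (ℕ × ℕ) :=
    AddMonoidAlgebra.ofCoeff (Finsupp.mapDomain (fun p => k + p) (c • h.coeff)) with hG
  have hinj : Function.Injective (fun p : ℕ × ℕ => k + p) := add_right_injective k
  -- support of G
  have hGsupp : ∀ p ∈ G.coeff.support, ∃ q ∈ h.coeff.support, p = k + q := by
    intro p hp
    have := Finsupp.mapDomain_support (f := fun p : ℕ × ℕ => k + p) (s := c • h.coeff) hp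
    obtain ⟨q, hq, hqe⟩ := Finset.mem_image.mp this
    exact ⟨q, Finsupp.support_smul hq, hqe.symm⟩
  have hGle : ∀ p ∈ G.coeff.support, T.le p m' := by
    intro p hp
    obtain ⟨q, hq, rfl⟩ := hGsupp p hp
    have : T.le (q + k) (sh + k) := T.add_right _ _ _ (hhLP.2 q hq)
    rw [add_comm q k, add_comm sh k, hksh] at this
    exact this
  have hm'lt : T.lt m' si := ⟨hgLP.2 _ hm's, hm'ne⟩
  have hGsi : G.coeff si = 0 := by
    by_contra hx
    have hmem : si ∈ G.coeff.support := Finsupp.mem_support_iff.mpr hx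
    exact hm'ne (T.le_antisymm _ _ (hGle si hmem) hm'lt.1).symm
  have hGm' : G.coeff m' = g.coeff m' := by
    have : G.coeff (k + sh) = (c • h.coeff) sh := Finsupp.mapDomain_apply hinj _ _
    rw [hksh] at this
    rw [this, Finsupp.smul_apply, smul_eq_mul, hc, mul_assoc, inv_mul_cancel₀ hlc, mul_one]
  set g₁ : AddMonoidAlgebra L (ℕ × ℕ) := g - G with hg₁
  have hg₁m' : g₁.coeff m' = 0 := by
    show (g - G).coeff m' = 0
    rw [AddMonoidAlgebra.coeff_sub, Finsupp.sub_apply, hGm', sub_self]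
  have hg₁si : g₁.coeff si = g.coeff si := by
    show (g - G).coeff si = g.coeff si
    rw [AddMonoidAlgebra.coeff_sub, Finsupp.sub_apply, hGsi, sub_zero]
  have hgsine : g.coeff si ≠ 0 := Finsupp.mem_support_iff.mp hgLP.1
  have hg₁supp : ∀ p ∈ g₁.coeff.support, p ∈ g.coeff.support ∪ G.coeff.support := fun p hp =>
    Finsupp.support_sub (f := g.coeff) (g := G.coeff) hp
  have hg₁LP : IsLP T g₁ si := by
    constructor
    · exact Finsupp.mem_support_iff.mpr (by rw [hg₁si]; exact hgsine)
    · intro p hp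
      rcases Finset.mem_union.mp (hg₁supp p hp) with hp' | hp'
      · exact hgLP.2 p hp'
      · exact T.le_trans _ _ _ (hGle p hp') hm'lt.1
  refine ⟨g₁, ?_, hg₁LP, ?_⟩
  · -- g₁ ∈ Lambda
    refine ⟨fun hx => hgsine (by rw [← hg₁si, hx]; rfl), ?_⟩
    intro s' n hs' hn1 hn2 hnl
    have hseq : s' = si := isLP_unique T hs' hg₁LP
    subst hseq
    rw [recEval_eq_E hn1 hn2]
    have hEsub : E U g₁ s' n = E U g s' n - E U G s' n := by
      rw [hg₁]
      unfold E
      rw [AddMonoidAlgebra.coeff_sub]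
      exact Finsupp.sum_sub_index (fun a b₁ b₂ => sub_mul _ _ _)
    have hEg : E U g s' n = 0 := by
      rw [← recEval_eq_E hn1 hn2]
      exact hgΛ.2 s' n hgLP hn1 hn2 hnl
    -- compute E U G s' n
    set n' : ℕ × ℕ := m' + (n - s') with hn'
    have hkey : ∀ q : ℕ × ℕ, k + q + n - s' = q + n' - sh := by
      intro q
      have e1 : k.1 + sh.1 = m'.1 := by rw [← hksh]; rfl
      have e2 : k.2 + sh.2 = m'.2 := by rw [← hksh]; rfl
      ext
      · show k.1 + q.1 + n.1 - s'.1 = q.1 + (m'.1 + (n.1 - s'.1)) - sh.1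
        omega
      · show k.2 + q.2 + n.2 - s'.2 = q.2 + (m'.2 + (n.2 - s'.2)) - sh.2
        omega
    have hn'm : m'.1 ≤ n'.1 ∧ m'.2 ≤ n'.2 := by
      constructor <;> simp [hn'] <;> omega
    have hn'le : T.le n' n := by
      have h0 : T.le (m' + (n - s')) (s' + (n - s')) := T.add_right _ _ _ hm'lt.1
      have : s' + (n - s') = n := by ext <;> show _ + ( _ - _) = _ <;> omega
      rwa [this] at h0
    have hn'lt : T.lt n' l := Tlt_of_le_of_lt T hn'le hnl
    have hEG : E U G s' n = 0 := by
      have e1 : (Finsupp.mapDomain (fun p => k + p) (c • h.coeff)).sum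
            (fun p a => a * U (p + n - s')) =
          (c • h.coeff).sum (fun q a => a * U (k + q + n - s')) :=
        Finsupp.sum_mapDomain_index (fun b => zero_mul _)
          (fun b m₁ m₂ => add_mul _ _ _)
      have e2 : (c • h.coeff).sum (fun q a => a * U (k + q + n - s')) =
          h.coeff.sum (fun q a => (c * a) * U (k + q + n - s')) :=
        Finsupp.sum_smul_index (fun q => zero_mul _)
      rw [E, hG, AddMonoidAlgebra.coeff_ofCoeff, e1, e2]
      have : (h.coeff.sum fun q a => c * a * U (k + q + n - s')) =
          c * h.coeff.sum fun q a => a * U (q + n' - sh) := by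
        rw [Finsupp.mul_sum]
        apply Finsupp.sum_congr
        intro q _
        rw [hkey q, mul_assoc]
      rw [this]
      have hrec : h.coeff.sum (fun q a => a * U (q + n' - sh)) = 0 := by
        have hE : E U h sh n' = 0 := by
          rw [← recEval_eq_E (le_trans hsh1 hn'm.1) (le_trans hsh2 hn'm.2)]
          exact hhΛ.2 sh n' hhLP (le_trans hsh1 hn'm.1) (le_trans hsh2 hn'm.2) hn'lt
        exact hE
      rw [hrec, mul_zero]
    rw [hEsub, hEg, hEG, sub_zero]
  · -- support condition
    intro p hp
    have hpne : p ≠ m' := by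
      intro hx
      exact Finsupp.mem_support_iff.mp hp (hx ▸ hg₁m')
    refine ⟨hpne, ?_⟩
    rcases Finset.mem_union.mp (hg₁supp p hp) with hp' | hp'
    · exact Or.inl hp'
    · exact Or.inr ⟨hGle p hp', hpne⟩

/-- Full reduction of one polynomial: well-founded recursion along the monomial order. -/
lemma reduce {U : ℕ × ℕ → L} {l : ℕ × ℕ} {d : ℕ} {ss : ℕ → ℕ × ℕ}
    (hdp : IsDefPoints d ss)
    {f0 : ℕ → AddMonoidAlgebra L (ℕ × ℕ)}
    (hf0 : ∀ j, j < d → f0 j ∈ Lambda T U l ∧ IsLP T (f0 j) (ss j))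
    (i : ℕ) (hi : i < d) :
    ∃ g, g ∈ Lambda T U l ∧ IsLP T g (ss i) ∧
      ∀ p ∈ g.coeff.support, p ≠ ss i → p ∈ deltaSet d ss := by
  classical
  have claim : ∀ M : ℕ × ℕ, ∀ g : AddMonoidAlgebra L (ℕ × ℕ),
      g ∈ Lambda T U l → IsLP T g (ss i) →
      (∀ p ∈ g.coeff.support, p ≠ ss i → p ∉ deltaSet d ss → T.le p M) →
      ∃ g', g' ∈ Lambda T U l ∧ IsLP T g' (ss i) ∧
        ∀ p ∈ g'.coeff.support, p ≠ ss i → p ∈ deltaSet d ss := by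
    intro M
    induction M using WellFounded.induction T.wf with
    | _ M IH =>
      intro g hgΛ hgLP hbound
      by_cases hbad : ∃ p ∈ g.coeff.support, p ≠ ss i ∧ p ∉ deltaSet d ss
      · obtain ⟨p0, hp0s, hp0ne, hp0Δ⟩ := hbad
        set B := g.coeff.support.filter (fun p => p ≠ ss i ∧ p ∉ deltaSet d ss) with hB
        have hBne : B.Nonempty := ⟨p0, Finset.mem_filter.mpr ⟨hp0s, hp0ne, hp0Δ⟩⟩
        obtain ⟨m', hm'B, hm'max⟩ := exists_max T B hBne
        obtain ⟨hm's, hm'ne, hm'Δ⟩ := Finset.mem_filter.mp hm'B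
        obtain ⟨g₁, hg₁Λ, hg₁LP, hg₁supp⟩ :=
          step T hdp hf0 hgΛ hgLP hm's hm'ne hm'Δ
        -- all bad monomials of g₁ are T-strictly below m'
        have hg₁bad : ∀ p ∈ g₁.coeff.support, p ≠ ss i → p ∉ deltaSet d ss → T.lt p m' := by
          intro p hp hpne hpΔ
          obtain ⟨hpm', hpor⟩ := hg₁supp p hp
          rcases hpor with hp' | hp'
          · exact ⟨hm'max p (Finset.mem_filter.mpr ⟨hp', hpne, hpΔ⟩), hpm'⟩
          · exact hp'
        by_cases hbad₁ : ∃ p ∈ g₁.coeff.support, p ≠ ss i ∧ p ∉ deltaSet d ss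
        · obtain ⟨p1, hp1s, hp1ne, hp1Δ⟩ := hbad₁
          set B₁ := g₁.coeff.support.filter (fun p => p ≠ ss i ∧ p ∉ deltaSet d ss) with hB₁
          have hB₁ne : B₁.Nonempty := ⟨p1, Finset.mem_filter.mpr ⟨hp1s, hp1ne, hp1Δ⟩⟩
          obtain ⟨m'', hm''B, hm''max⟩ := exists_max T B₁ hB₁ne
          obtain ⟨hm''s, hm''ne, hm''Δ⟩ := Finset.mem_filter.mp hm''B
          have hm''lt : T.lt m'' m' := hg₁bad m'' hm''s hm''ne hm''Δ
          have hm'M : T.le m' M := hbound m' hm's hm'ne hm'Δ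
          have hm''M : T.lt m'' M := Tlt_of_lt_of_le T hm''lt hm'M
          exact IH m'' hm''M g₁ hg₁Λ hg₁LP
            (fun p hp hpne hpΔ => hm''max p (Finset.mem_filter.mpr ⟨hp, hpne, hpΔ⟩))
        · refine ⟨g₁, hg₁Λ, hg₁LP, ?_⟩
          intro p hp hpne
          by_contra hx
          exact hbad₁ ⟨p, hp, hpne, hx⟩
      · refine ⟨g, hgΛ, hgLP, ?_⟩
        intro p hp hpne
        by_contra hx
        exact hbad ⟨p, hp, hpne, hx⟩
  have := (hf0 i hi)
  exact claim (ss i) (f0 i) this.1 this.2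
    (fun p hp _ _ => this.2.2 p hp)

end Stmt12

end Proof

/-- any minimal set of polynomials for `u^l` can be replaced by one in
normal form with the same leading exponents: every non-leading exponent of every
polynomial lies in the delta-set. -/
theorem stmt_12 (T : MonomialOrder2) {L : Type*} [Field L] (r₁ r₂ : ℕ)
    (hr₁ : 0 < r₁) (hr₂ : 0 < r₂) (U : ℕ × ℕ → L) (hU : DoublyPeriodic r₁ r₂ U)
    (l : ℕ × ℕ) (d : ℕ) (s : ℕ → ℕ × ℕ) (f : ℕ → AddMonoidAlgebra L (ℕ × ℕ))
    (hmin : IsMinimalSet T U l d s f) :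
    ∃ f' : ℕ → AddMonoidAlgebra L (ℕ × ℕ),
      IsMinimalSet T U l d s f' ∧
        ∀ i, i < d → ∀ m ∈ (f' i).coeff.support, m ≠ s i → m ∈ deltaSet d s := by
  classical
  obtain ⟨hdp, hpoly, hneg⟩ := hmin
  have H : ∀ i, i < d → ∃ g, g ∈ Lambda T U l ∧ IsLP T g (s i) ∧
      ∀ p ∈ g.coeff.support, p ≠ s i → p ∈ deltaSet d s :=
    fun i hi => Stmt12.reduce T hdp hpoly i hi
  choose g hg using H
  refine ⟨fun i => if h : i < d then g i h else f i, ⟨hdp, ?_, hneg⟩, ?_⟩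
  · intro i hi
    simp only [dif_pos hi]
    exact ⟨(hg i hi).1, (hg i hi).2.1⟩
  · intro i hi m hm hne
    simp only [dif_pos hi] at hm
    exact (hg i hi).2.2 m hm hne
end

section
/- Let t ≥ 1 be an integer, let s^(1),…,s^(d) be a sequence of defining points with associated delta-set Δ, and suppose |Δ| ≤ t. Then (1) for all a, b ∈ Δ, a + b ∈ 𝒮(t); and (2) for all i ∈ {1,…,d} and all a ∈ Δ, s^(i) + a ∈ 𝒮(t). -/
section Aux

private lemma card_le_of_sub {Δ : Set (ℕ × ℕ)} {t : ℕ} (hfin : Δ.Finite)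
    (h : Δ.ncard ≤ t) (S : Finset (ℕ × ℕ)) (hS : ↑S ⊆ Δ) : S.card ≤ t := by
  have h2 := Set.ncard_le_ncard hS hfin
  rw [Set.ncard_coe_finset] at h2
  exact h2.trans h

private lemma mono1 {d : ℕ} {s : ℕ → ℕ × ℕ} (hs : IsDefPoints d s) {i j : ℕ}
    (hij : i ≤ j) (hj : j < d) : (s j).1 ≤ (s i).1 := by
  rcases eq_or_lt_of_le hij with rfl | h
  · exact le_rfl
  · exact (hs.2.1 i j h hj).le

private lemma mono2 {d : ℕ} {s : ℕ → ℕ × ℕ} (hs : IsDefPoints d s) {i j : ℕ}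
    (hij : i ≤ j) (hj : j < d) : (s i).2 ≤ (s j).2 := by
  rcases eq_or_lt_of_le hij with rfl | h
  · exact le_rfl
  · exact (hs.2.2.1 i j h hj).le

private lemma delta_down {d : ℕ} {s : ℕ → ℕ × ℕ} {a : ℕ × ℕ} (ha : a ∈ deltaSet d s)
    {x y : ℕ} (hx : x ≤ a.1) (hy : y ≤ a.2) : ((x, y) : ℕ × ℕ) ∈ deltaSet d s := by
  obtain ⟨i, hi, h1, h2⟩ := ha
  exact ⟨i, hi, by omega, by omega⟩

private lemma delta_d2 {d : ℕ} {s : ℕ → ℕ × ℕ} {a : ℕ × ℕ} (ha : a ∈ deltaSet d s) :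
    2 ≤ d := by
  obtain ⟨i, hi, _, _⟩ := ha; omega

private lemma delta_bd {d : ℕ} {s : ℕ → ℕ × ℕ} (hs : IsDefPoints d s) {a : ℕ × ℕ}
    (ha : a ∈ deltaSet d s) : a.1 < (s 0).1 ∧ a.2 < (s (d - 1)).2 := by
  obtain ⟨i, hi, h1, h2⟩ := ha
  constructor
  · have := mono1 hs (Nat.zero_le i) (by omega); omega
  · have := mono2 hs (show i + 1 ≤ d - 1 by omega) (by omega); omega

private lemma delta_finite {d : ℕ} {s : ℕ → ℕ × ℕ} (hs : IsDefPoints d s) :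
    (deltaSet d s).Finite := by
  apply Set.Finite.subset
    ((Finset.range ((s 0).1) ×ˢ Finset.range ((s (d - 1)).2)).finite_toSet)
  rintro m ⟨i, hi, h1, h2⟩
  have hm1 := mono1 hs (Nat.zero_le i) (by omega)
  have hm2 := mono2 hs (show i + 1 ≤ d - 1 by omega) (by omega)
  simp only [Finset.coe_product, Set.mem_prod, Finset.mem_coe, Finset.mem_range]
  omega

private lemma row_mem {d : ℕ} {s : ℕ → ℕ × ℕ} (hs : IsDefPoints d s) (hd : 2 ≤ d)
    {x : ℕ} (hx : x < (s 0).1) : ((x, 0) : ℕ × ℕ) ∈ deltaSet d s := by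
  refine ⟨0, by omega, by simpa using hx, ?_⟩
  have h1 := hs.2.2.1 0 1 one_pos (by omega)
  have h0 := hs.2.2.2.2
  simp only [zero_add]
  omega

private lemma col_mem {d : ℕ} {s : ℕ → ℕ × ℕ} (hs : IsDefPoints d s) (hd : 2 ≤ d)
    {y : ℕ} (hy : y < (s (d - 1)).2) : ((0, y) : ℕ × ℕ) ∈ deltaSet d s := by
  refine ⟨d - 2, by omega, ?_, ?_⟩
  · have h1 := hs.2.1 (d - 2) (d - 1) (by omega) (by omega)
    have h2 := hs.2.2.2.1
    simp only
    omega
  · have : d - 2 + 1 = d - 1 := by omega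
    rw [this]
    simpa using hy

private lemma two_rect_aux {t A B C D : ℕ} {Δ : Set (ℕ × ℕ)}
    (hb : ∀ S : Finset (ℕ × ℕ), ↑S ⊆ Δ → S.card ≤ t)
    (h1 : ∀ x y, x ≤ A → y ≤ B → ((x, y) : ℕ × ℕ) ∈ Δ)
    (h2 : ∀ x y, x ≤ C → y ≤ D → ((x, y) : ℕ × ℕ) ∈ Δ)
    (hCA : C ≤ A) (hA : 1 ≤ A + C) (hB : 1 ≤ B + D) :
    A + C + B + D ≤ t := by
  have hA1 : 1 ≤ A := by omega
  rcases le_or_gt D B with hDB | hBD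
  · -- containment : use the rectangle of a alone
    have hB1 : 1 ≤ B := by omega
    have hc := hb (Finset.range (A + 1) ×ˢ Finset.range (B + 1)) ?_
    · rw [Finset.card_product, Finset.card_range, Finset.card_range] at hc
      obtain ⟨A', rfl⟩ := Nat.exists_eq_add_of_le hA1
      obtain ⟨B', rfl⟩ := Nat.exists_eq_add_of_le hB1
      nlinarith
    · intro p hp
      simp only [Finset.coe_product, Set.mem_prod, Finset.mem_coe, Finset.mem_range] at hp
      exact h1 p.1 p.2 (by omega) (by omega)
  · obtain ⟨E, rfl⟩ : ∃ E, D = B + 1 + E := ⟨D - B - 1, by omega⟩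
    have hdisj : Disjoint (Finset.range (A + 1) ×ˢ Finset.range (B + 1))
        (Finset.range (C + 1) ×ˢ Finset.Icc (B + 1) (B + 1 + E)) := by
      rw [Finset.disjoint_left]
      intro p hp hq
      simp only [Finset.mem_product, Finset.mem_range, Finset.mem_Icc] at hp hq
      omega
    have hc := hb (Finset.range (A + 1) ×ˢ Finset.range (B + 1) ∪
        Finset.range (C + 1) ×ˢ Finset.Icc (B + 1) (B + 1 + E)) ?_
    · rw [Finset.card_union_of_disjoint hdisj, Finset.card_product, Finset.card_product] at hc
      simp only [Finset.card_range, Nat.card_Icc] at hc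
      have hE : B + 1 + E + 1 - (B + 1) = E + 1 := by omega
      rw [hE] at hc
      obtain ⟨A', rfl⟩ := Nat.exists_eq_add_of_le hA1
      nlinarith
    · intro p hp
      simp only [Finset.coe_union, Set.mem_union, Finset.coe_product, Set.mem_prod,
        Finset.mem_coe, Finset.mem_range, Finset.mem_Icc] at hp
      rcases hp with h | h
      · exact h1 p.1 p.2 (by omega) (by omega)
      · exact h2 p.1 p.2 (by omega) (by omega)

private lemma two_rect {t A B C D : ℕ} {Δ : Set (ℕ × ℕ)}
    (hb : ∀ S : Finset (ℕ × ℕ), ↑S ⊆ Δ → S.card ≤ t)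
    (h1 : ∀ x y, x ≤ A → y ≤ B → ((x, y) : ℕ × ℕ) ∈ Δ)
    (h2 : ∀ x y, x ≤ C → y ≤ D → ((x, y) : ℕ × ℕ) ∈ Δ)
    (hA : 1 ≤ A + C) (hB : 1 ≤ B + D) :
    A + C + B + D ≤ t := by
  rcases le_total C A with h | h
  · exact two_rect_aux hb h1 h2 h hA hB
  · have := two_rect_aux hb h2 h1 h (by omega) (by omega)
    omega

private lemma hook_rect {t P Q A B : ℕ} {Δ : Set (ℕ × ℕ)}
    (hb : ∀ S : Finset (ℕ × ℕ), ↑S ⊆ Δ → S.card ≤ t)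
    (hH : ∀ x, x < P → ((x, Q) : ℕ × ℕ) ∈ Δ)
    (hV : ∀ y, y < Q → ((P, y) : ℕ × ℕ) ∈ Δ)
    (hR : ∀ x y, x ≤ A → y ≤ B → ((x, y) : ℕ × ℕ) ∈ Δ)
    (hno : ¬((P ≤ A) ∧ (Q ≤ B))) (h1 : 1 ≤ P + A) (h2 : 1 ≤ Q + B) :
    P + Q + A + B ≤ t := by
  rcases lt_or_ge A P with hAP | hPA
  · rcases Nat.eq_zero_or_pos B with rfl | hB1
    · -- B = 0, Q ≥ 1
      have hQ1 : 1 ≤ Q := by omega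
      have d13 : Disjoint (Finset.range P ×ˢ ({Q} : Finset ℕ))
          ({P} ×ˢ Finset.range Q) := by
        rw [Finset.disjoint_left]
        intro p hp hq
        simp only [Finset.mem_product, Finset.mem_range, Finset.mem_singleton] at hp hq
        omega
      have d23 : Disjoint (Finset.range P ×ˢ ({Q} : Finset ℕ) ∪ {P} ×ˢ Finset.range Q)
          (Finset.range (A + 1) ×ˢ ({0} : Finset ℕ)) := by
        rw [Finset.disjoint_left]
        intro p hp hq
        simp only [Finset.mem_union, Finset.mem_product, Finset.mem_range,
          Finset.mem_singleton] at hp hq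
        omega
      have hc := hb (Finset.range P ×ˢ ({Q} : Finset ℕ) ∪ {P} ×ˢ Finset.range Q ∪
          Finset.range (A + 1) ×ˢ ({0} : Finset ℕ)) ?_
      · rw [Finset.card_union_of_disjoint d23, Finset.card_union_of_disjoint d13] at hc
        simp only [Finset.card_product, Finset.card_range, Finset.card_singleton] at hc
        omega
      · intro p hp
        simp only [Finset.coe_union, Set.mem_union, Finset.coe_product, Set.mem_prod,
          Finset.mem_coe, Finset.mem_range, Finset.mem_singleton] at hp
        rcases hp with (h | h) | h
        · have := hH p.1 h.1
          rw [← h.2] at this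
          exact this
        · have := hV p.2 h.2
          rw [← h.1] at this
          exact this
        · have := hR p.1 p.2 (by omega) (by omega)
          exact this
    · -- B ≥ 1
      obtain ⟨E, hP⟩ : ∃ E, P = A + 1 + E := ⟨P - A - 1, by omega⟩
      have d13 : Disjoint (Finset.Ico (A + 1) P ×ˢ ({Q} : Finset ℕ))
          ({P} ×ˢ Finset.range Q) := by
        rw [Finset.disjoint_left]
        intro p hp hq
        simp only [Finset.mem_product, Finset.mem_Ico, Finset.mem_range,
          Finset.mem_singleton] at hp hq
        omega
      have d23 : Disjoint (Finset.Ico (A + 1) P ×ˢ ({Q} : Finset ℕ) ∪ {P} ×ˢ Finset.range Q)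
          (Finset.range (A + 1) ×ˢ Finset.range (B + 1)) := by
        rw [Finset.disjoint_left]
        intro p hp hq
        simp only [Finset.mem_union, Finset.mem_product, Finset.mem_Ico, Finset.mem_range,
          Finset.mem_singleton] at hp hq
        omega
      have hc := hb (Finset.Ico (A + 1) P ×ˢ ({Q} : Finset ℕ) ∪ {P} ×ˢ Finset.range Q ∪
          Finset.range (A + 1) ×ˢ Finset.range (B + 1)) ?_
      · rw [Finset.card_union_of_disjoint d23, Finset.card_union_of_disjoint d13] at hc
        simp only [Finset.card_product, Finset.card_range, Finset.card_singleton,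
          Nat.card_Ico] at hc
        subst hP
        have hE2 : A + 1 + E - (A + 1) = E := by omega
        rw [hE2] at hc
        have hAB : A ≤ A * B := Nat.le_mul_of_pos_right A hB1
        nlinarith
      · intro p hp
        simp only [Finset.coe_union, Set.mem_union, Finset.coe_product, Set.mem_prod,
          Finset.mem_coe, Finset.mem_Ico, Finset.mem_range, Finset.mem_singleton] at hp
        rcases hp with (h | h) | h
        · have := hH p.1 h.1.2
          rw [← h.2] at this
          exact this
        · have := hV p.2 h.2
          rw [← h.1] at this
          exact this
        · exact hR p.1 p.2 (by omega) (by omega)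
  · -- P ≤ A, hence B < Q and A ≥ 1
    have hBQ : B < Q := by
      rcases lt_or_ge B Q with h | h
      · exact h
      · exact absurd ⟨hPA, by omega⟩ hno
    have hA1 : 1 ≤ A := by omega
    obtain ⟨F, hQ⟩ : ∃ F, Q = B + 1 + F := ⟨Q - B - 1, by omega⟩
    have d13 : Disjoint (Finset.range P ×ˢ ({Q} : Finset ℕ))
        ({P} ×ˢ Finset.Ico (B + 1) Q) := by
      rw [Finset.disjoint_left]
      intro p hp hq
      simp only [Finset.mem_product, Finset.mem_Ico, Finset.mem_range,
        Finset.mem_singleton] at hp hq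
      omega
    have d23 : Disjoint (Finset.range P ×ˢ ({Q} : Finset ℕ) ∪ {P} ×ˢ Finset.Ico (B + 1) Q)
        (Finset.range (A + 1) ×ˢ Finset.range (B + 1)) := by
      rw [Finset.disjoint_left]
      intro p hp hq
      simp only [Finset.mem_union, Finset.mem_product, Finset.mem_Ico, Finset.mem_range,
        Finset.mem_singleton] at hp hq
      omega
    have hc := hb (Finset.range P ×ˢ ({Q} : Finset ℕ) ∪ {P} ×ˢ Finset.Ico (B + 1) Q ∪
        Finset.range (A + 1) ×ˢ Finset.range (B + 1)) ?_
    · rw [Finset.card_union_of_disjoint d23, Finset.card_union_of_disjoint d13] at hc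
      simp only [Finset.card_product, Finset.card_range, Finset.card_singleton,
        Nat.card_Ico] at hc
      subst hQ
      have hF2 : B + 1 + F - (B + 1) = F := by omega
      rw [hF2] at hc
      have hBA : B ≤ A * B := Nat.le_mul_of_pos_left B hA1
      nlinarith
    · intro p hp
      simp only [Finset.coe_union, Set.mem_union, Finset.coe_product, Set.mem_prod,
        Finset.mem_coe, Finset.mem_Ico, Finset.mem_range, Finset.mem_singleton] at hp
      rcases hp with (h | h) | h
      · have := hH p.1 h.1
        rw [← h.2] at this
        exact this
      · have := hV p.2 h.2.2
        rw [← h.1] at this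
        exact this
      · exact hR p.1 p.2 (by omega) (by omega)

end Aux

/-- if `Δ` is a delta-set with defining points `s^(1),…,s^(d)` and
`|Δ| ≤ t`, then `Δ + Δ ⊆ 𝒮(t)` and `{s^(i)} + Δ ⊆ 𝒮(t)`. -/
theorem stmt_13 (t d : ℕ) (ht : 1 ≤ t) (s : ℕ → ℕ × ℕ) (hs : IsDefPoints d s)
    (hcard : (deltaSet d s).ncard ≤ t) :
    (∀ a ∈ deltaSet d s, ∀ b ∈ deltaSet d s, a + b ∈ Sset t) ∧
      (∀ i, i < d → ∀ a ∈ deltaSet d s, s i + a ∈ Sset t) := by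
  have hb : ∀ S : Finset (ℕ × ℕ), ↑S ⊆ deltaSet d s → S.card ≤ t := fun S hS =>
    card_le_of_sub (delta_finite hs) hcard S hS
  -- bounds on the extremal defining points, valid as soon as d ≥ 2
  have hrow : 2 ≤ d → (s 0).1 ≤ t := by
    intro hd
    have hc := hb (Finset.range ((s 0).1) ×ˢ ({0} : Finset ℕ)) ?_
    · simpa using hc
    · intro p hp
      simp only [Finset.coe_product, Set.mem_prod, Finset.mem_coe, Finset.mem_range,
        Finset.mem_singleton] at hp
      have := row_mem hs hd hp.1
      rw [← hp.2] at this
      exact this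
  have hcol : 2 ≤ d → (s (d - 1)).2 ≤ t := by
    intro hd
    have hc := hb (({0} : Finset ℕ) ×ˢ Finset.range ((s (d - 1)).2)) ?_
    · simpa using hc
    · intro p hp
      simp only [Finset.coe_product, Set.mem_prod, Finset.mem_coe, Finset.mem_range,
        Finset.mem_singleton] at hp
      have := col_mem hs hd hp.2
      rw [← hp.1] at this
      exact this
  constructor
  · intro a ha b hbm
    have hd := delta_d2 ha
    have hba := delta_bd hs ha
    have hbb := delta_bd hs hbm
    have h1 := hrow hd
    have h2 := hcol hd
    simp only [Sset, Set.mem_setOf_eq, Prod.fst_add, Prod.snd_add]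
    rcases Nat.eq_zero_or_pos (a.1 + b.1) with hz | hp1
    · left; exact ⟨hz, by omega⟩
    rcases Nat.eq_zero_or_pos (a.2 + b.2) with hz | hp2
    · right; left; exact ⟨hz, by omega⟩
    · have key : a.1 + b.1 + a.2 + b.2 ≤ t :=
        two_rect hb (fun x y hx hy => delta_down ha hx hy)
          (fun x y hx hy => delta_down hbm hx hy) hp1 hp2
      right; right; exact ⟨by omega, by omega, by omega⟩
  · intro i hi a ha
    have hd := delta_d2 ha
    have hba := delta_bd hs ha
    have h1 := hrow hd
    have h2 := hcol hd
    have hsi1 : (s i).1 ≤ (s 0).1 := mono1 hs (Nat.zero_le i) hi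
    have hsi2 : (s i).2 ≤ (s (d - 1)).2 := mono2 hs (by omega) (by omega)
    simp only [Sset, Set.mem_setOf_eq, Prod.fst_add, Prod.snd_add]
    rcases Nat.eq_zero_or_pos ((s i).1 + a.1) with hz | hp1
    · left; exact ⟨hz, by omega⟩
    rcases Nat.eq_zero_or_pos ((s i).2 + a.2) with hz | hp2
    · right; left; exact ⟨hz, by omega⟩
    · have hH : ∀ x, x < (s i).1 → ((x, (s i).2) : ℕ × ℕ) ∈ deltaSet d s := by
        intro x hx
        by_cases hid : i + 1 < d
        · refine ⟨i, hid, by simpa using hx, ?_⟩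
          have := hs.2.2.1 i (i + 1) (by omega) hid
          simp only
          omega
        · have hieq : i = d - 1 := by omega
          have := hs.2.2.2.1
          rw [hieq] at hx
          omega
      have hV : ∀ y, y < (s i).2 → (((s i).1, y) : ℕ × ℕ) ∈ deltaSet d s := by
        intro y hy
        rcases Nat.eq_zero_or_pos i with rfl | hi1
        · have := hs.2.2.2.2
          omega
        · refine ⟨i - 1, by omega, ?_, ?_⟩
          · have := hs.2.1 (i - 1) i (by omega) hi
            simp only
            omega
          · have hieq : i - 1 + 1 = i := by omega
            rw [hieq]
            simpa using hy
      have hno : ¬(((s i).1 ≤ a.1) ∧ ((s i).2 ≤ a.2)) := by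
        rintro ⟨hx, hy⟩
        obtain ⟨j, hj, hj1, hj2⟩ := ha
        rcases le_or_gt i j with h | h
        · have := mono1 hs h (by omega)
          omega
        · have := mono2 hs (show j + 1 ≤ i by omega) hi
          omega
      have key : (s i).1 + (s i).2 + a.1 + a.2 ≤ t :=
        hook_rect hb hH hV (fun x y hx hy => delta_down ha hx hy) hno hp1 hp2
      right; right; exact ⟨by omega, by omega, by omega⟩
end
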